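/- arXiv:1701.04606 — 4 statements merged into one kernel-verified Lean document; each statement's English description precedes it below -/
import Mathlib

section
/- For any partition μ and any integer q, it is impossible to obtain a partition λ from μ by first removing a box of content q and then adding a horizontal domino whose two boxes have contents q−1 and q. -/
open Finset

/-- The content of a box in position `(i, j)` is `j - i`. -/
def content (b : ℕ × ℕ) : ℤ := (b.2 : ℤ) - (b.1 : ℤ)

/-- The anticontent of a box in position `(i, j)` is `i + j`. -/
def anticontent (b : ℕ × ℕ) : ℤ := (b.1 : ℤ) + (b.2 : ℤ)

/-- Two boxes are adjacent if they share a side. -/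
def BoxAdj (a b : ℕ × ℕ) : Prop :=
  (a.1 = b.1 ∧ (a.2 + 1 = b.2 ∨ b.2 + 1 = a.2)) ∨
  (a.2 = b.2 ∧ (a.1 + 1 = b.1 ∨ b.1 + 1 = a.1))

/-- A finite set of boxes is connected if any two boxes are linked by a chain of
adjacent boxes inside the set. -/
def IsConnectedBoxes (S : Finset (ℕ × ℕ)) : Prop :=
  ∀ a ∈ S, ∀ b ∈ S,
    Relation.ReflTransGen (fun x y => x ∈ S ∧ y ∈ S ∧ BoxAdj x y) a b

/-- A skew Young diagram: the difference of two Young diagrams `l ⊆ m`. -/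
def IsSkew (S : Finset (ℕ × ℕ)) : Prop :=
  ∃ l m : YoungDiagram, l ≤ m ∧ S = m.cells \ l.cells

/-- A hook: a nonempty connected skew Young diagram with no two boxes of the same content. -/
def IsHook (S : Finset (ℕ × ℕ)) : Prop :=
  IsSkew S ∧ S.Nonempty ∧ IsConnectedBoxes S ∧
    ∀ a ∈ S, ∀ b ∈ S, content a = content b → a = b

/-- Height: number of rows occupied. -/
def ht (S : Finset (ℕ × ℕ)) : ℕ := (S.image Prod.fst).card

/-- Width: number of columns occupied. -/
def wd (S : Finset (ℕ × ℕ)) : ℕ := (S.image Prod.snd).card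

/-- `m` is obtained from `l` by adding one box of content `c`. -/
def AddBoxC (l m : YoungDiagram) (c : ℤ) : Prop :=
  ∃ b : ℕ × ℕ, b ∉ l ∧ content b = c ∧ m.cells = insert b l.cells

/-- `l` is obtained from `m` by removing one box of content `c`. -/
def RemoveBoxC (m l : YoungDiagram) (c : ℤ) : Prop :=
  ∃ b : ℕ × ℕ, b ∈ m ∧ content b = c ∧ l.cells = m.cells.erase b

/-- `m` is obtained from `l` by adding a horizontal domino whose left box has
content `q − 1` (so its right box has content `q`). -/
def AddHDomino (l m : YoungDiagram) (q : ℤ) : Prop :=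
  ∃ i j : ℕ, (i, j) ∉ l ∧ (i, j + 1) ∉ l ∧ content (i, j) = q - 1 ∧
    m.cells = insert (i, j) (insert (i, j + 1) l.cells)

/-- One cannot first remove a box of content `q` from a partition and then add a
horizontal domino with boxes of contents `q − 1` and `q`. -/
theorem no_remove_then_hdomino (μ : YoungDiagram) (q : ℤ) :
    ¬ ∃ ν lam : YoungDiagram, RemoveBoxC μ ν q ∧ AddHDomino ν lam q := by
  rintro ⟨ν, lam, ⟨⟨bi, bj⟩, hbμ, hbc, hν⟩, i, j, hl, hr, hc, hlam⟩
  simp only [content] at hbc hc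
  -- membership in ν
  have hmemν : ∀ x : ℕ × ℕ, x ∈ ν ↔ x ∈ μ ∧ x ≠ (bi, bj) := by
    intro x
    rw [← YoungDiagram.mem_cells, hν, Finset.mem_erase, YoungDiagram.mem_cells]
    tauto
  have key : (j : ℤ) + 1 - i = (bj : ℤ) - bi := by omega
  rcases lt_trichotomy i bi with hlt | heq | hgt
  · -- i < bi : then j + 1 < bj, contradiction with right box not in ν
    have hj : (j : ℕ) + 1 ≤ bj := by omega
    have h1 : (i, bj) ∈ μ := μ.up_left_mem (le_of_lt hlt) le_rfl hbμ
    have h2 : (i, bj) ∈ ν := (hmemν _).2 ⟨h1, by simp [Prod.ext_iff]; omega⟩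
    exact hr (ν.up_left_mem le_rfl hj h2)
  · -- i = bi : then j + 1 = bj, left box is in ν
    have hj : (j : ℕ) + 1 = bj := by omega
    have h1 : (i, j) ∈ μ := μ.up_left_mem le_rfl (by omega) (heq ▸ hbμ)
    exact hl ((hmemν _).2 ⟨h1, by simp [Prod.ext_iff]; omega⟩)
  · -- bi < i : then bj ≤ j, box b would reappear in lam
    have hj : bj ≤ j := by omega
    have hL : (i, j) ∈ lam := by
      rw [← YoungDiagram.mem_cells, hlam]; simp
    have hB : (bi, bj) ∈ lam := lam.up_left_mem (le_of_lt hgt) hj hL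
    rw [← YoungDiagram.mem_cells, hlam, Finset.mem_insert, Finset.mem_insert] at hB
    rcases hB with h | h | h
    · exact absurd h (by simp [Prod.ext_iff]; omega)
    · exact absurd h (by simp [Prod.ext_iff]; omega)
    · rw [hν, Finset.mem_erase] at h
      exact h.1 rfl
end

section
/- Every covering of a skew Young diagram by hooks is unique: if C and C' are two decompositions of a skew Young diagram κ into connected hooks such that in each decomposition any two hooks are either disjoint or nested, then C = C'. -/
open Finset

/-- Two hooks are disjoint if no box of one equals or shares a side with a box of the other. -/
def HooksDisjoint (γ δ : Finset (ℕ × ℕ)) : Prop :=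
  ∀ a ∈ γ, ∀ b ∈ δ, a ≠ b ∧ ¬ BoxAdj a b

/-- `γ` is nested in `δ`: each lower and right side of a box of `γ` is shared
with another box of `γ` or a box of `δ`. -/
def NestedIn (γ δ : Finset (ℕ × ℕ)) : Prop :=
  ∀ b ∈ γ, ((b.1 + 1, b.2) ∈ γ ∨ (b.1 + 1, b.2) ∈ δ) ∧
           ((b.1, b.2 + 1) ∈ γ ∨ (b.1, b.2 + 1) ∈ δ)

/-- A covering of `κ`: a decomposition of its boxes into connected hooks, any
two of which are disjoint or nested. -/
def IsCovering (κ : Finset (ℕ × ℕ)) (C : Finset (Finset (ℕ × ℕ))) : Prop :=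
  (∀ γ ∈ C, IsHook γ) ∧
  (∀ γ ∈ C, γ ⊆ κ) ∧
  (∀ b ∈ κ, ∃! γ, γ ∈ C ∧ b ∈ γ) ∧
  (∀ γ ∈ C, ∀ δ ∈ C, γ ≠ δ → HooksDisjoint γ δ ∨ NestedIn γ δ ∨ NestedIn δ γ)

/- ===================== auxiliary machinery ===================== -/

/-- The diagonal (south-east) neighbor of a box. -/
def diagb (b : ℕ × ℕ) : ℕ × ℕ := (b.1 + 1, b.2 + 1)

/-- Two boxes lie in a common hook of the covering `C`. -/
def SameHook (C : Finset (Finset (ℕ × ℕ))) (x y : ℕ × ℕ) : Prop :=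
  ∃ γ, γ ∈ C ∧ x ∈ γ ∧ y ∈ γ

lemma content_diagb (b : ℕ × ℕ) : content (diagb b) = content b := by
  unfold content diagb; push_cast; ring

lemma diagb_ne (b : ℕ × ℕ) : diagb b ≠ b := by
  simp [diagb, Prod.ext_iff]

lemma boxadj_diagb {a b : ℕ × ℕ} (h : BoxAdj a b) : BoxAdj (diagb a) (diagb b) := by
  unfold BoxAdj diagb at *; simp only [] at *; omega

lemma boxadj_content {a b : ℕ × ℕ} (h : BoxAdj a b) :
    content a = content b + 1 ∨ content b = content a + 1 := by
  unfold BoxAdj at h; unfold content; omega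

/-- Discrete intermediate value theorem along a path: a path from content `≤ c`
to content `> c` contains an adjacent pair crossing from content `c` to `c+1`. -/
lemma crossing {S : Finset (ℕ × ℕ)} (c : ℤ) {a b : ℕ × ℕ}
    (h : Relation.ReflTransGen (fun x y => x ∈ S ∧ y ∈ S ∧ BoxAdj x y) a b) :
    content a ≤ c → c < content b →
    ∃ p q, p ∈ S ∧ q ∈ S ∧ BoxAdj p q ∧ content p = c ∧ content q = c + 1 := by
  induction h with
  | refl => intro h1 h2; omega
  | @tail m b hax hstep ih =>
    intro h1 h2
    by_cases hx : content m ≤ c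
    · refine ⟨m, b, hstep.1, hstep.2.1, hstep.2.2, ?_⟩
      have := boxadj_content hstep.2.2
      omega
    · exact ih h1 (by omega)

/-- In a hook, boxes of consecutive contents are adjacent. -/
lemma consecutive_adj {S : Finset (ℕ × ℕ)} (h : IsHook S) {z w : ℕ × ℕ}
    (hz : z ∈ S) (hw : w ∈ S) (hc : content w = content z + 1) : BoxAdj z w := by
  obtain ⟨p, q, hp, hq, hadj, hpc, hqc⟩ :=
    crossing (content z) (h.2.2.1 z hz w hw) le_rfl (by omega)
  obtain rfl := h.2.2.2 p hp z hz hpc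
  obtain rfl := h.2.2.2 q hq w hw (by omega)
  exact hadj

lemma adj_right_content {p : ℕ × ℕ} {b : ℕ × ℕ} (h : BoxAdj p (b.1, b.2 + 1))
    (hc : content p = content b) : p = b ∨ p = diagb b := by
  obtain ⟨p1, p2⟩ := p
  obtain ⟨b1, b2⟩ := b
  unfold BoxAdj content at *
  simp only [diagb, Prod.ext_iff] at *
  omega

lemma not_diagb_mem {γ : Finset (ℕ × ℕ)} (hγ : IsHook γ) {b : ℕ × ℕ} (hb : b ∈ γ) :
    diagb b ∉ γ :=
  fun h => diagb_ne b (hγ.2.2.2 _ h _ hb (content_diagb b))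

/-- Key lemma: if `γ` is nested in `δ` and they are disjoint (as sets), then the
diagonal neighbor of any box of `γ` lies in `δ`. -/
lemma diag_lemma {γ δ : Finset (ℕ × ℕ)} (hγ : IsHook γ) (hδ : IsHook δ)
    (hdisj : ∀ z ∈ γ, z ∉ δ) (hnest : NestedIn γ δ) {b : ℕ × ℕ} (hb : b ∈ γ) :
    diagb b ∈ δ := by
  have hnd : diagb b ∉ γ := not_diagb_mem hγ hb
  obtain ⟨hS, hE⟩ := hnest b hb
  rcases hE with hEγ | hEδ
  · rcases (hnest _ hEγ).1 with h | h
    · exact absurd h hnd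
    · exact h
  · rcases hS with hSγ | hSδ
    · rcases (hnest _ hSγ).2 with h | h
      · exact absurd h hnd
      · exact h
    · have hpath := hδ.2.2.1 _ hSδ _ hEδ
      obtain ⟨p, q, hp, hq, hadj, hpc, hqc⟩ := crossing (content b) hpath
        (by unfold content; simp only []; omega)
        (by unfold content; simp only []; omega)
      have hq' : q = (b.1, b.2 + 1) := hδ.2.2.2 q hq _ hEδ
        (by unfold content at *; simp only [] at *; omega)
      subst hq'
      rcases adj_right_content hadj hpc with h1 | h1
      · exact absurd (h1 ▸ hp) (hdisj b hb)
      · exact h1 ▸ hp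

/- ===================== covering utilities ===================== -/

lemma cov_unique {κ : Finset (ℕ × ℕ)} {C : Finset (Finset (ℕ × ℕ))}
    (hC : IsCovering κ C) {γ δ : Finset (ℕ × ℕ)} {z : ℕ × ℕ}
    (hγ : γ ∈ C) (hδ : δ ∈ C) (hzγ : z ∈ γ) (hzδ : z ∈ δ) : γ = δ := by
  have hz : z ∈ κ := hC.2.1 γ hγ hzγ
  obtain ⟨u, _, hu⟩ := hC.2.2.1 z hz
  rw [hu γ ⟨hγ, hzγ⟩, hu δ ⟨hδ, hzδ⟩]

lemma cov_disj {κ : Finset (ℕ × ℕ)} {C : Finset (Finset (ℕ × ℕ))}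
    (hC : IsCovering κ C) {γ δ : Finset (ℕ × ℕ)}
    (hγ : γ ∈ C) (hδ : δ ∈ C) (hne : γ ≠ δ) : ∀ z ∈ γ, z ∉ δ :=
  fun z hz hz' => hne (cov_unique hC hγ hδ hz hz')

lemma exists_hook {κ : Finset (ℕ × ℕ)} {C : Finset (Finset (ℕ × ℕ))}
    (hC : IsCovering κ C) {z : ℕ × ℕ} (hz : z ∈ κ) : ∃ γ, γ ∈ C ∧ z ∈ γ := by
  obtain ⟨γ, ⟨hγ, hzγ⟩, -⟩ := hC.2.2.1 z hz
  exact ⟨γ, hγ, hzγ⟩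

lemma skew_step {κ : Finset (ℕ × ℕ)} (hκ : IsSkew κ) {b : ℕ × ℕ}
    (hb : b ∈ κ) (hd : diagb b ∈ κ) : (b.1 + 1, b.2) ∈ κ ∧ (b.1, b.2 + 1) ∈ κ := by
  obtain ⟨l, m, hlm, rfl⟩ := hκ
  simp only [Finset.mem_sdiff, YoungDiagram.mem_cells] at hb hd ⊢
  obtain ⟨hbm, hbl⟩ := hb
  obtain ⟨hdm, hdl⟩ := hd
  refine ⟨⟨m.up_left_mem le_rfl (Nat.le_succ _) hdm, fun h => hbl ?_⟩,
          m.up_left_mem (Nat.le_succ _) le_rfl hdm, fun h => hbl ?_⟩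
  · exact l.up_left_mem (Nat.le_succ _) le_rfl h
  · exact l.up_left_mem le_rfl (Nat.le_succ _) h

/- ===================== structure of coverings ===================== -/

/-- If `y ∈ γ` and the diagonal neighbor of `y` lies in `δ` (both hooks of a
covering of a skew shape), then `γ` is nested in `δ`. -/
lemma claimC {κ : Finset (ℕ × ℕ)} {C : Finset (Finset (ℕ × ℕ))}
    (hκ : IsSkew κ) (hC : IsCovering κ C) {γ δ : Finset (ℕ × ℕ)}
    (hγ : γ ∈ C) (hδ : δ ∈ C) {y : ℕ × ℕ} (hy : y ∈ γ) (hdy : diagb y ∈ δ) :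
    NestedIn γ δ := by
  have hhγ := hC.1 γ hγ
  have hhδ := hC.1 δ hδ
  have hyκ : y ∈ κ := hC.2.1 γ hγ hy
  have hdyκ : diagb y ∈ κ := hC.2.1 δ hδ hdy
  have hγδ : γ ≠ δ := by
    rintro rfl
    exact diagb_ne y (hhγ.2.2.2 _ hdy _ hy (content_diagb y))
  obtain ⟨hSκ, hEκ⟩ := skew_step hκ hyκ hdyκ
  obtain ⟨ε, hε, hSε⟩ := exists_hook hC hSκ
  have hadjS : BoxAdj y (y.1 + 1, y.2) := by
    right; exact ⟨rfl, Or.inl rfl⟩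
  have hεor : ε = γ ∨ ε = δ := by
    by_contra hcon
    push_neg at hcon
    obtain ⟨hεγ, hεδ⟩ := hcon
    have hnd : ¬ HooksDisjoint γ ε := fun h => (h y hy _ hSε).2 hadjS
    rcases hC.2.2.2 γ hγ ε hε (fun h => hεγ h.symm) with h | h | h
    · exact hnd h
    · have hmem := diag_lemma hhγ (hC.1 ε hε)
        (cov_disj hC hγ hε (fun h => hεγ h.symm)) h hy
      exact hεδ (cov_unique hC hε hδ hmem hdy)
    · have hdS : diagb (y.1 + 1, y.2) ∈ γ := diag_lemma (hC.1 ε hε) hhγ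
        (cov_disj hC hε hγ hεγ) h hSε
      have hbad : BoxAdj (diagb (y.1 + 1, y.2)) y := consecutive_adj hhγ hdS hy
        (by unfold content diagb; simp only []; omega)
      unfold BoxAdj diagb at hbad; simp only [] at hbad; omega
  have hnotdisj : ¬ HooksDisjoint γ δ := by
    rcases hεor with rfl | rfl
    · intro h
      exact (h _ hSε _ hdy).2 (by left; exact ⟨rfl, Or.inl rfl⟩)
    · intro h
      exact (h _ hy _ hSε).2 hadjS
  rcases hC.2.2.2 γ hγ δ hδ hγδ with h | h | h
  · exact absurd h hnotdisj
  · exact h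
  · exfalso
    have hmem : diagb (diagb y) ∈ γ :=
      diag_lemma hhδ hhγ (cov_disj hC hδ hγ (Ne.symm hγδ)) h hdy
    have heq := hhγ.2.2.2 _ hmem _ hy (by rw [content_diagb, content_diagb])
    simp only [diagb, Prod.ext_iff] at heq
    omega

/-- If two boxes are in a common hook and one has its diagonal neighbor in `κ`,
so does the other. -/
lemma diag_mem_of_same {κ : Finset (ℕ × ℕ)} {C : Finset (Finset (ℕ × ℕ))}
    (hκ : IsSkew κ) (hC : IsCovering κ C) {γ : Finset (ℕ × ℕ)} {x y : ℕ × ℕ}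
    (hγ : γ ∈ C) (hx : x ∈ γ) (hy : y ∈ γ) (hdx : diagb x ∈ κ) : diagb y ∈ κ := by
  obtain ⟨δ, hδ, hdδ⟩ := exists_hook hC hdx
  have hne : γ ≠ δ := by
    rintro rfl
    exact not_diagb_mem (hC.1 γ hγ) hx hdδ
  have hnest := claimC hκ hC hγ hδ hx hdδ
  exact hC.2.1 δ hδ (diag_lemma (hC.1 γ hγ) (hC.1 δ hδ) (cov_disj hC hγ hδ hne) hnest hy)

/-- Adjacent boxes whose diagonal neighbors are outside `κ` are in a common hook. -/
lemma rim_same {κ : Finset (ℕ × ℕ)} {C : Finset (Finset (ℕ × ℕ))}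
    (hC : IsCovering κ C) {x y : ℕ × ℕ} {γ δ : Finset (ℕ × ℕ)}
    (hγ : γ ∈ C) (hδ : δ ∈ C) (hx : x ∈ γ) (hy : y ∈ δ) (hadj : BoxAdj x y)
    (hdx : diagb x ∉ κ) (hdy : diagb y ∉ κ) : γ = δ := by
  by_contra hne
  rcases hC.2.2.2 γ hγ δ hδ hne with h | h | h
  · exact (h x hx y hy).2 hadj
  · exact hdx (hC.2.1 δ hδ (diag_lemma (hC.1 γ hγ) (hC.1 δ hδ) (cov_disj hC hγ hδ hne) h hx))
  · exact hdy (hC.2.1 γ hγ (diag_lemma (hC.1 δ hδ) (hC.1 γ hγ) (cov_disj hC hδ hγ (Ne.symm hne)) h hy))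

/-- Adjacent boxes with both diagonals in `κ` are in a common hook iff their
diagonals are. -/
lemma same_iff_diag_same {κ : Finset (ℕ × ℕ)} {C : Finset (Finset (ℕ × ℕ))}
    (hκ : IsSkew κ) (hC : IsCovering κ C) {x y : ℕ × ℕ}
    (hx : x ∈ κ) (hy : y ∈ κ) (hadj : BoxAdj x y)
    (hdx : diagb x ∈ κ) (hdy : diagb y ∈ κ) :
    SameHook C x y ↔ SameHook C (diagb x) (diagb y) := by
  constructor
  · rintro ⟨γ, hγ, hxγ, hyγ⟩
    obtain ⟨δ, hδ, hdδ⟩ := exists_hook hC hdx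
    have hne : γ ≠ δ := by
      rintro rfl; exact not_diagb_mem (hC.1 γ hγ) hxγ hdδ
    have hnest := claimC hκ hC hγ hδ hxγ hdδ
    exact ⟨δ, hδ, hdδ,
      diag_lemma (hC.1 γ hγ) (hC.1 δ hδ) (cov_disj hC hγ hδ hne) hnest hyγ⟩
  · rintro ⟨δ, hδ, hdxδ, hdyδ⟩
    obtain ⟨γ, hγ, hxγ⟩ := exists_hook hC hx
    obtain ⟨γ', hγ', hyγ'⟩ := exists_hook hC hy
    have hγδ : γ ≠ δ := by
      rintro rfl; exact not_diagb_mem (hC.1 γ hγ) hxγ hdxδ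
    have hγ'δ : γ' ≠ δ := by
      rintro rfl; exact not_diagb_mem (hC.1 γ' hγ') hyγ' hdyδ
    suffices h : γ = γ' by exact ⟨γ, hγ, hxγ, h ▸ hyγ'⟩
    by_contra hne
    rcases hC.2.2.2 γ hγ γ' hγ' hne with h | h | h
    · exact (h x hxγ y hyγ').2 hadj
    · have := diag_lemma (hC.1 γ hγ) (hC.1 γ' hγ') (cov_disj hC hγ hγ' hne) h hxγ
      exact hγ'δ (cov_unique hC hγ' hδ this hdxδ)
    · have := diag_lemma (hC.1 γ' hγ') (hC.1 γ hγ) (cov_disj hC hγ' hγ (Ne.symm hne)) h hyγ'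
      exact hγδ (cov_unique hC hγ hδ this hdyδ)

lemma measure_lt {κ : Finset (ℕ × ℕ)} {x : ℕ × ℕ} (hdx : diagb x ∈ κ) :
    (κ.filter fun z => anticontent (diagb x) < anticontent z).card <
    (κ.filter fun z => anticontent x < anticontent z).card := by
  apply Finset.card_lt_card
  rw [Finset.ssubset_iff_of_subset]
  · refine ⟨diagb x, Finset.mem_filter.2 ⟨hdx, ?_⟩, ?_⟩
    · unfold anticontent diagb; simp only []; omega
    · simp [Finset.mem_filter]
  · intro z hz
    rw [Finset.mem_filter] at hz ⊢
    refine ⟨hz.1, ?_⟩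
    have := hz.2
    unfold anticontent diagb at *
    simp only [] at *
    omega

/-- The same-hook relation on adjacent boxes is independent of the covering. -/
lemma main_adj {κ : Finset (ℕ × ℕ)} (hκ : IsSkew κ) {C C' : Finset (Finset (ℕ × ℕ))}
    (hC : IsCovering κ C) (hC' : IsCovering κ C') :
    ∀ n : ℕ, ∀ x y : ℕ × ℕ,
      (κ.filter fun z => anticontent x < anticontent z).card ≤ n →
      x ∈ κ → y ∈ κ → BoxAdj x y → (SameHook C x y ↔ SameHook C' x y) := by
  intro n
  induction n with
  | zero =>
    intro x y hm hx hy hadj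
    by_cases hdx : diagb x ∈ κ
    · exfalso
      have h1 : diagb x ∈ κ.filter fun z => anticontent x < anticontent z :=
        Finset.mem_filter.2 ⟨hdx, by unfold anticontent diagb; simp only []; omega⟩
      have := Finset.card_pos.2 ⟨_, h1⟩
      omega
    · by_cases hdy : diagb y ∈ κ
      · constructor
        · rintro ⟨γ, hγ, hxγ, hyγ⟩
          exact absurd (diag_mem_of_same hκ hC hγ hyγ hxγ hdy) hdx
        · rintro ⟨γ, hγ, hxγ, hyγ⟩
          exact absurd (diag_mem_of_same hκ hC' hγ hyγ hxγ hdy) hdx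
      · constructor
        · intro _
          obtain ⟨γ, hγ, hxγ⟩ := exists_hook hC' hx
          obtain ⟨δ, hδ, hyδ⟩ := exists_hook hC' hy
          exact ⟨γ, hγ, hxγ, (rim_same hC' hγ hδ hxγ hyδ hadj hdx hdy) ▸ hyδ⟩
        · intro _
          obtain ⟨γ, hγ, hxγ⟩ := exists_hook hC hx
          obtain ⟨δ, hδ, hyδ⟩ := exists_hook hC hy
          exact ⟨γ, hγ, hxγ, (rim_same hC hγ hδ hxγ hyδ hadj hdx hdy) ▸ hyδ⟩
  | succ n ih =>
    intro x y hm hx hy hadj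
    by_cases hdx : diagb x ∈ κ
    · by_cases hdy : diagb y ∈ κ
      · have hlt := measure_lt (κ := κ) (x := x) hdx
        rw [same_iff_diag_same hκ hC hx hy hadj hdx hdy,
            same_iff_diag_same hκ hC' hx hy hadj hdx hdy]
        exact ih (diagb x) (diagb y) (by omega) hdx hdy (boxadj_diagb hadj)
      · constructor
        · rintro ⟨γ, hγ, hxγ, hyγ⟩
          exact absurd (diag_mem_of_same hκ hC hγ hxγ hyγ hdx) hdy
        · rintro ⟨γ, hγ, hxγ, hyγ⟩
          exact absurd (diag_mem_of_same hκ hC' hγ hxγ hyγ hdx) hdy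
    · by_cases hdy : diagb y ∈ κ
      · constructor
        · rintro ⟨γ, hγ, hxγ, hyγ⟩
          exact absurd (diag_mem_of_same hκ hC hγ hyγ hxγ hdy) hdx
        · rintro ⟨γ, hγ, hxγ, hyγ⟩
          exact absurd (diag_mem_of_same hκ hC' hγ hyγ hxγ hdy) hdx
      · constructor
        · intro _
          obtain ⟨γ, hγ, hxγ⟩ := exists_hook hC' hx
          obtain ⟨δ, hδ, hyδ⟩ := exists_hook hC' hy
          exact ⟨γ, hγ, hxγ, (rim_same hC' hγ hδ hxγ hyδ hadj hdx hdy) ▸ hyδ⟩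
        · intro _
          obtain ⟨γ, hγ, hxγ⟩ := exists_hook hC hx
          obtain ⟨δ, hδ, hyδ⟩ := exists_hook hC hy
          exact ⟨γ, hγ, hxγ, (rim_same hC hγ hδ hxγ hyδ hadj hdx hdy) ▸ hyδ⟩

lemma samehook_trans {κ : Finset (ℕ × ℕ)} {C : Finset (Finset (ℕ × ℕ))}
    (hC : IsCovering κ C) {x y z : ℕ × ℕ}
    (h1 : SameHook C x y) (h2 : SameHook C y z) : SameHook C x z := by
  obtain ⟨γ, hγ, hx, hy⟩ := h1
  obtain ⟨δ, hδ, hy', hz⟩ := h2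
  exact ⟨γ, hγ, hx, (cov_unique hC hγ hδ hy hy').symm ▸ hz⟩

/-- The same-hook relation (transferred along connectivity of hooks) is
independent of the covering. -/
lemma transfer {κ : Finset (ℕ × ℕ)} (hκ : IsSkew κ) {C C' : Finset (Finset (ℕ × ℕ))}
    (hC : IsCovering κ C) (hC' : IsCovering κ C') {x y : ℕ × ℕ}
    (h : SameHook C x y) : SameHook C' x y := by
  obtain ⟨γ, hγ, hxγ, hyγ⟩ := h
  have hxκ : x ∈ κ := hC.2.1 γ hγ hxγ
  have hconn := (hC.1 γ hγ).2.2.1 x hxγ y hyγ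
  clear hyγ
  induction hconn with
  | refl =>
    obtain ⟨δ, hδ, hxδ⟩ := exists_hook hC' hxκ
    exact ⟨δ, hδ, hxδ, hxδ⟩
  | @tail m b hxm hstep ih =>
    obtain ⟨hmγ, hbγ, hadj⟩ := hstep
    have hmκ : m ∈ κ := hC.2.1 γ hγ hmγ
    have hbκ : b ∈ κ := hC.2.1 γ hγ hbγ
    have hmb : SameHook C' m b :=
      (main_adj hκ hC hC' _ m b le_rfl hmκ hbκ hadj).1 ⟨γ, hγ, hmγ, hbγ⟩
    exact samehook_trans hC' ih hmb

lemma cov_subset {κ : Finset (ℕ × ℕ)} (hκ : IsSkew κ) {C C' : Finset (Finset (ℕ × ℕ))}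
    (hC : IsCovering κ C) (hC' : IsCovering κ C') : C ⊆ C' := by
  intro γ hγ
  obtain ⟨x, hx⟩ := (hC.1 γ hγ).2.1
  have hxκ : x ∈ κ := hC.2.1 γ hγ hx
  obtain ⟨γ', hγ', hxγ'⟩ := exists_hook hC' hxκ
  suffices h : γ = γ' by rw [h]; exact hγ'
  ext z
  constructor
  · intro hz
    obtain ⟨η, hη, hxη, hzη⟩ := transfer hκ hC hC' ⟨γ, hγ, hx, hz⟩
    exact (cov_unique hC' hγ' hη hxγ' hxη) ▸ hzη
  · intro hz
    obtain ⟨η, hη, hxη, hzη⟩ := transfer hκ hC' hC ⟨γ', hγ', hxγ', hz⟩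
    exact (cov_unique hC hγ hη hx hxη) ▸ hzη
/-- A covering of a skew Young diagram by pairwise disjoint-or-nested hooks is unique. -/
theorem covering_unique (κ : Finset (ℕ × ℕ)) (hκ : IsSkew κ)
    (C C' : Finset (Finset (ℕ × ℕ)))
    (hC : IsCovering κ C) (hC' : IsCovering κ C') : C = C' :=
  Finset.Subset.antisymm (cov_subset hκ hC hC') (cov_subset hκ hC' hC)
end

section
/- Let ν be a skew Young diagram and let κ be obtained from ν by adding a vertical domino (two boxes in one column, one above the other) such that no box of ν lies above or to the left of either added box. Then at most one of the skew diagrams κ and ν belongs to Γ. -/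
open Finset

/-- The D-condition: the anticontent of the box of minimal content is minimal
among the anticontents of all boxes (no box strictly above the diagonal through
the minimal box). -/
def DCond (S : Finset (ℕ × ℕ)) : Prop :=
  ∀ m ∈ S, (∀ c ∈ S, content m ≤ content c) →
    ∀ b ∈ S, anticontent m ≤ anticontent b

/-- `Γ₀`: connected hooks satisfying the HW-condition and the D-condition. -/
def InGammaZero (γ : Finset (ℕ × ℕ)) : Prop :=
  IsHook γ ∧ wd γ = ht γ + 1 ∧ DCond γ

/-- `Γ`: skew Young diagrams whose (unique) covering by pairwise
disjoint-or-nested hooks consists of hooks of `Γ₀`. -/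
def InGamma (κ : Finset (ℕ × ℕ)) : Prop :=
  IsSkew κ ∧ ∃ C : Finset (Finset (ℕ × ℕ)), IsCovering κ C ∧ ∀ γ ∈ C, InGammaZero γ

namespace VD

abbrev Box := ℕ × ℕ

/-- the next box down the diagonal -/
def ds (x : Box) : Box := (x.1 + 1, x.2 + 1)

lemma ct_ds (x : Box) : content (ds x) = content x := by simp [content, ds]
lemma ac_ds (x : Box) : anticontent (ds x) = anticontent x + 2 := by simp [anticontent, ds]; ring

lemma box_ext {u v : Box} (h1 : content u = content v) (h2 : anticontent u = anticontent v) :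
    u = v := by
  simp only [content, anticontent] at h1 h2
  have a : u.1 = v.1 := by omega
  have b : u.2 = v.2 := by omega
  exact Prod.ext a b

/-- adjacency in content/anticontent coordinates -/
lemma boxadj_iff {u v : Box} : BoxAdj u v ↔
    (content v = content u + 1 ∨ content u = content v + 1) ∧
    (anticontent v = anticontent u + 1 ∨ anticontent u = anticontent v + 1) := by
  simp only [BoxAdj, content, anticontent]
  constructor
  · rintro (⟨h, h' | h'⟩ | ⟨h, h' | h'⟩) <;> omega
  · rintro ⟨h1 | h1, h2 | h2⟩ <;> [left; right; right; left] <;> constructor <;> omega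

lemma adj_ct {u v : Box} (h : BoxAdj u v) :
    content v = content u + 1 ∨ content u = content v + 1 := (boxadj_iff.1 h).1

/-- right neighbour: content +1, anticontent +1 -/
lemma eq_right {x v : Box} (h1 : content v = content x + 1)
    (h2 : anticontent v = anticontent x + 1) : v = (x.1, x.2 + 1) := by
  apply box_ext <;> simp [content, anticontent] at * <;> omega

lemma eq_below {x v : Box} (h1 : content v = content x - 1)
    (h2 : anticontent v = anticontent x + 1) : v = (x.1 + 1, x.2) := by
  apply box_ext <;> simp [content, anticontent] at * <;> omega

lemma eq_ds {x v : Box} (h1 : content v = content x)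
    (h2 : anticontent v = anticontent x + 2) : v = ds x := by
  apply box_ext <;> simp [content, anticontent, ds] at * <;> omega

/-! ### Quasi-skew shapes -/

structure QS (S : Finset Box) : Prop where
  ne : ∀ x ∈ S, ∀ y ∈ S, x.1 ≤ y.1 → x.2 ≤ y.2 → (x.1, y.2) ∈ S
  sw : ∀ x ∈ S, ∀ y ∈ S, x.1 ≤ y.1 → x.2 ≤ y.2 → (y.1, x.2) ∈ S
  row : ∀ x ∈ S, ∀ y ∈ S, x.1 = y.1 → ∀ c, x.2 ≤ c → c ≤ y.2 → (x.1, c) ∈ S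
  col : ∀ x ∈ S, ∀ y ∈ S, x.2 = y.2 → ∀ r, x.1 ≤ r → r ≤ y.1 → (r, x.2) ∈ S

lemma isSkew_qs {S : Finset Box} (h : IsSkew S) : QS S := by
  obtain ⟨l, m, hlm, rfl⟩ := h
  have hm : ∀ x : Box, x ∈ m.cells \ l.cells → x ∈ m := by
    intro x hx; exact (Finset.mem_sdiff.1 hx).1
  have hl : ∀ x : Box, x ∈ m.cells \ l.cells → x ∉ l := by
    intro x hx; exact (Finset.mem_sdiff.1 hx).2
  have mem_iff : ∀ x : Box, x ∈ m.cells \ l.cells ↔ (x.1, x.2) ∈ m ∧ (x.1, x.2) ∉ l := by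
    intro x; rw [Finset.mem_sdiff]; rfl
  constructor
  · intro x hx y hy h1 h2
    rw [mem_iff]
    constructor
    · exact m.up_left_mem h1 le_rfl (by exact hm _ hy)
    · intro hc
      exact hl _ hx (l.up_left_mem le_rfl h2 hc)
  · intro x hx y hy h1 h2
    rw [mem_iff]
    constructor
    · exact m.up_left_mem le_rfl h2 (hm _ hy)
    · intro hc
      exact hl _ hx (l.up_left_mem h1 le_rfl hc)
  · intro x hx y hy hr c hc1 hc2
    rw [mem_iff]
    constructor
    · exact m.up_left_mem (le_of_eq hr) hc2 (hm _ hy)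
    · intro hc
      exact hl _ hx (l.up_left_mem le_rfl hc1 hc)
  · intro x hx y hy hcc r h1 h2
    rw [mem_iff]
    constructor
    · exact m.up_left_mem h2 (le_of_eq hcc) (hm _ hy)
    · intro hc
      exact hl _ hx (l.up_left_mem h1 le_rfl hc)

/-- diagonal contact: x and ds x in S give the two side boxes -/
lemma qs_contact {S : Finset Box} (hS : QS S) {x : Box} (hx : x ∈ S) (hdx : ds x ∈ S) :
    (x.1 + 1, x.2) ∈ S ∧ (x.1, x.2 + 1) ∈ S := by
  constructor
  · exact hS.sw x hx (ds x) hdx (by simp [ds]) (by simp [ds])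
  · exact hS.ne x hx (ds x) hdx (by simp [ds]) (by simp [ds])

/-- diagonal closure downward step -/
lemma qs_diag_step {S : Finset Box} (hS : QS S) {x y : Box} (hx : x ∈ S) (hy : y ∈ S)
    (hct : content x = content y) (hlt : x.1 < y.1) : ds x ∈ S := by
  have hc2 : x.2 < y.2 := by simp [content] at hct; omega
  have h1 : (y.1, x.2) ∈ S := hS.sw x hx y hy (le_of_lt hlt) (le_of_lt hc2)
  have h2 : (x.1 + 1, x.2) ∈ S := hS.col x hx (y.1, x.2) h1 rfl (x.1 + 1) (by omega) (by omega)
  have h3 : (x.1 + 1, y.2) ∈ S := hS.ne (x.1+1, x.2) h2 y hy (by omega) (le_of_lt hc2)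
  have h4 : (x.1 + 1, x.2 + 1) ∈ S :=
    hS.row (x.1+1, x.2) h2 (x.1+1, y.2) h3 rfl (x.2+1) (by omega) (by omega)
  exact h4

/-- full diagonal closure -/
lemma qs_diag_closure {S : Finset Box} (hS : QS S) {x y : Box} (hx : x ∈ S) (hy : y ∈ S)
    (hct : content x = content y) : ∀ r, x.1 ≤ r → r ≤ y.1 → (r, r + x.2 - x.1) ∈ S := by
  intro r hr1 hr2
  induction r with
  | zero =>
    have : x.1 = 0 := by omega
    have : (0, 0 + x.2 - x.1) = x := by apply Prod.ext <;> simp <;> omega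
    rwa [this]
  | succ n ih =>
    rcases Nat.lt_or_ge n x.1 with h | h
    · have : x.1 = n + 1 := by omega
      have : (n + 1, n + 1 + x.2 - x.1) = x := by apply Prod.ext <;> simp <;> omega
      rwa [this]
    · have hn : (n, n + x.2 - x.1) ∈ S := ih h (by omega)
      have hctn : content (n, n + x.2 - x.1) = content y := by
        simp [content] at hct ⊢; omega
      have hstep : ds (n, n + x.2 - x.1) ∈ S :=
        qs_diag_step hS hn hy hctn (by simp; omega)
      have : ds (n, n + x.2 - x.1) = (n + 1, n + 1 + x.2 - x.1) := by
        simp [ds]; omega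
      rwa [this] at hstep

/-! ### Hook path lemmas -/

lemma rtg_cross {S : Finset Box} {a b : Box}
    (h : Relation.ReflTransGen (fun x y => x ∈ S ∧ y ∈ S ∧ BoxAdj x y) a b)
    (t : ℤ) (h1 : content a ≤ t) (h2 : t < content b) :
    ∃ u v : Box, u ∈ S ∧ v ∈ S ∧ BoxAdj u v ∧ content u ≤ t ∧ t < content v := by
  induction h with
  | refl => omega
  | @tail b' c hab hstep ih =>
    rcases le_or_gt (content b') t with hb | hb
    · exact ⟨b', c, hstep.1, hstep.2.1, hstep.2.2, hb, h2⟩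
    · exact ih hb

lemma hook_between {γ : Finset Box} (hγ : IsHook γ) {a b : Box} (ha : a ∈ γ) (hb : b ∈ γ)
    {c : ℤ} (h1 : content a ≤ c) (h2 : c ≤ content b) : ∃ x ∈ γ, content x = c := by
  rcases eq_or_lt_of_le h2 with he | hlt
  · exact ⟨b, hb, he.symm⟩
  · obtain ⟨u, v, hu, hv, hadj, hu1, hu2⟩ := rtg_cross (hγ.2.2.1 a ha b hb) c h1 hlt
    have := adj_ct hadj
    exact ⟨u, hu, by omega⟩

lemma hook_consec {γ : Finset Box} (hγ : IsHook γ) {a b : Box} (ha : a ∈ γ) (hb : b ∈ γ)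
    (hc : content b = content a + 1) :
    b = (a.1, a.2 + 1) ∨ a = (b.1 + 1, b.2) := by
  obtain ⟨u, v, hu, hv, hadj, hu1, hu2⟩ :=
    rtg_cross (hγ.2.2.1 a ha b hb) (content a) le_rfl (by omega)
  have hct := adj_ct hadj
  have huc : content u = content a := by omega
  have hvc : content v = content a + 1 := by omega
  have hua : u = a := hγ.2.2.2 u hu a ha huc
  have hvb : v = b := hγ.2.2.2 v hv b hb (by omega)
  subst hua hvb
  obtain ⟨_, hac⟩ := boxadj_iff.1 hadj
  rcases hac with h | h
  · left; exact eq_right (by omega) h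
  · right; exact eq_below (by omega) (by omega)

lemma hook_consec_ac {γ : Finset Box} (hγ : IsHook γ) {a b : Box} (ha : a ∈ γ) (hb : b ∈ γ)
    (hc : content b = content a + 1) :
    anticontent b = anticontent a + 1 ∨ anticontent b = anticontent a - 1 := by
  rcases hook_consec hγ ha hb hc with h | h
  · left; rw [h]; simp [anticontent]; ring
  · right; rw [h]; simp [anticontent]; ring

/-- monotonicity along a hook -/
lemma hook_mono {γ : Finset Box} (hγ : IsHook γ) :
    ∀ n : ℕ, ∀ a ∈ γ, ∀ b ∈ γ, content b = content a + n → a.2 ≤ b.2 ∧ b.1 ≤ a.1 := by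
  intro n
  induction n with
  | zero =>
    intro a ha b hb hc
    have : b = a := hγ.2.2.2 b hb a ha (by omega)
    subst this; omega
  | succ n ih =>
    intro a ha b hb hc
    obtain ⟨w, hw, hwc⟩ := hook_between hγ ha hb (c := content a + n) (by omega) (by omega)
    obtain ⟨h1, h2⟩ := ih a ha w hw hwc
    rcases hook_consec hγ hw hb (by omega) with h | h
    · have e1 : b.2 = w.2 + 1 := by rw [h]
      have e2 : b.1 = w.1 := by rw [h]
      omega
    · have e1 : w.1 = b.1 + 1 := by rw [h]
      have e2 : w.2 = b.2 := by rw [h]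
      omega

lemma hook_mono' {γ : Finset Box} (hγ : IsHook γ) {a b : Box} (ha : a ∈ γ) (hb : b ∈ γ)
    (h : content a ≤ content b) : a.2 ≤ b.2 ∧ b.1 ≤ a.1 := by
  obtain ⟨n, hn⟩ := Int.le.dest h
  exact hook_mono hγ n a ha b hb (by omega)

/-- existence of the top (max content) box -/
lemma hook_top {γ : Finset Box} (hγ : IsHook γ) :
    ∃ t ∈ γ, ∀ y ∈ γ, content y ≤ content t := by
  obtain ⟨t, ht, hmax⟩ := Finset.exists_max_image γ content hγ.2.1
  exact ⟨t, ht, hmax⟩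

lemma hook_bot {γ : Finset Box} (hγ : IsHook γ) :
    ∃ m ∈ γ, ∀ y ∈ γ, content m ≤ content y := by
  obtain ⟨t, ht, hmin⟩ := Finset.exists_min_image γ content hγ.2.1
  exact ⟨t, ht, hmin⟩

structure PH (γ : Finset Box) : Prop where
  uniq : ∀ a ∈ γ, ∀ b ∈ γ, content a = content b → a = b
  between : ∀ a ∈ γ, ∀ b ∈ γ, ∀ c : ℤ, content a ≤ c → c ≤ content b → ∃ x ∈ γ, content x = c
  consec : ∀ a ∈ γ, ∀ b ∈ γ, content b = content a + 1 → b = (a.1, a.2 + 1) ∨ a = (b.1 + 1, b.2)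

lemma hook_PH {γ : Finset Box} (hγ : IsHook γ) : PH γ :=
  ⟨hγ.2.2.2, fun a ha b hb c h1 h2 => hook_between hγ ha hb h1 h2,
   fun a ha b hb h => hook_consec hγ ha hb h⟩

lemma ph_mono {γ : Finset Box} (hγ : PH γ) :
    ∀ n : ℕ, ∀ a ∈ γ, ∀ b ∈ γ, content b = content a + n → a.2 ≤ b.2 ∧ b.1 ≤ a.1 := by
  intro n
  induction n with
  | zero =>
    intro a ha b hb hc
    have : b = a := hγ.uniq b hb a ha (by omega)
    subst this; omega
  | succ n ih =>
    intro a ha b hb hc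
    obtain ⟨w, hw, hwc⟩ := hγ.between a ha b hb (content a + n) (by omega) (by omega)
    obtain ⟨h1, h2⟩ := ih a ha w hw hwc
    rcases hγ.consec w hw b hb (by omega) with h | h
    · have e1 : b.2 = w.2 + 1 := by rw [h]
      have e2 : b.1 = w.1 := by rw [h]
      omega
    · have e1 : w.1 = b.1 + 1 := by rw [h]
      have e2 : w.2 = b.2 := by rw [h]
      omega

lemma ph_mono' {γ : Finset Box} (hγ : PH γ) {a b : Box} (ha : a ∈ γ) (hb : b ∈ γ)
    (h : content a ≤ content b) : a.2 ≤ b.2 ∧ b.1 ≤ a.1 := by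
  obtain ⟨n, hn⟩ := Int.le.dest h
  exact ph_mono hγ n a ha b hb (by omega)

/-- the HW condition in anticontent form -/
lemma ph_wd_ht : ∀ n (γ : Finset Box), γ.card = n → PH γ →
    ∀ t ∈ γ, (∀ y ∈ γ, content y ≤ content t) →
    ∀ m ∈ γ, (∀ y ∈ γ, content m ≤ content y) →
    (wd γ : ℤ) - ht γ = anticontent t - anticontent m := by
  intro n
  induction n using Nat.strong_induction_on with
  | _ n ih =>
  intro γ hcard hph t htmem htmax m hmmem hmin
  rcases eq_or_lt_of_le (hmin t htmem) with heq | hlt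
  · -- single box
    have hall : ∀ y ∈ γ, y = t := by
      intro y hy
      exact hph.uniq y hy t htmem (le_antisymm (htmax y hy) (heq ▸ hmin y hy))
    have hmt : m = t := hall m hmmem
    have hγt : γ = {t} := by
      apply Finset.eq_singleton_iff_unique_mem.2 ⟨htmem, hall⟩
    subst hmt
    rw [hγt]
    simp [wd, ht]
  · -- at least two boxes
    obtain ⟨p, hp, hpc⟩ := hph.between m hmmem t htmem (content t - 1) (by omega) (by omega)
    have hpt : p ≠ t := by intro h; rw [h] at hpc; omega
    set γ' := γ.erase t with hγ'
    have hmem' : ∀ y, y ∈ γ' ↔ y ∈ γ ∧ y ≠ t := by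
      intro y; simp [hγ', Finset.mem_erase, and_comm]
    have hlt' : ∀ y ∈ γ', content y ≤ content t - 1 := by
      intro y hy
      obtain ⟨hy1, hy2⟩ := (hmem' y).1 hy
      have := htmax y hy1
      rcases eq_or_lt_of_le this with h | h
      · exact absurd (hph.uniq y hy1 t htmem h) hy2
      · omega
    have hph' : PH γ' := by
      constructor
      · intro a ha b hb h
        exact hph.uniq a ((hmem' a).1 ha).1 b ((hmem' b).1 hb).1 h
      · intro a ha b hb c h1 h2
        obtain ⟨x, hx, hxc⟩ := hph.between a ((hmem' a).1 ha).1 b ((hmem' b).1 hb).1 c h1 h2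
        refine ⟨x, (hmem' x).2 ⟨hx, ?_⟩, hxc⟩
        intro h; rw [h] at hxc
        have := hlt' b hb; omega
      · intro a ha b hb h
        exact hph.consec a ((hmem' a).1 ha).1 b ((hmem' b).1 hb).1 h
    have hpmem' : p ∈ γ' := (hmem' p).2 ⟨hp, hpt⟩
    have hmmem' : m ∈ γ' := (hmem' m).2 ⟨hmmem, fun h => by rw [h] at hlt; omega⟩
    have hpmax' : ∀ y ∈ γ', content y ≤ content p := by
      intro y hy; have := hlt' y hy; omega
    have hmin' : ∀ y ∈ γ', content m ≤ content y := by
      intro y hy; exact hmin y ((hmem' y).1 hy).1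
    have hcard' : γ'.card = n - 1 := by
      rw [hγ', Finset.card_erase_of_mem htmem, hcard]
    have hn1 : 1 ≤ n := by rw [← hcard]; exact Finset.card_pos.2 ⟨t, htmem⟩
    have IH := ih (n-1) (by omega) γ' hcard' hph' p hpmem' hpmax' m hmmem' hmin'
    have hins : γ = insert t γ' := by rw [hγ', Finset.insert_erase htmem]
    have hmono : ∀ y ∈ γ', y.2 ≤ p.2 ∧ p.1 ≤ y.1 := by
      intro y hy
      exact ph_mono' hph' hy hpmem' (by have := hlt' y hy; omega)
    rcases hph.consec p hp t htmem (by omega) with hcase | hcase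
    · -- right step : t = (p.1, p.2+1)
      have ht2 : t.2 = p.2 + 1 := by rw [hcase]
      have ht1 : t.1 = p.1 := by rw [hcase]
      have hwd : wd γ = wd γ' + 1 := by
        rw [hins, wd, Finset.image_insert, Finset.card_insert_of_notMem (by
          intro hc
          obtain ⟨y, hy, hy2⟩ := Finset.mem_image.1 hc
          have := (hmono y hy).1; omega)]
        rfl
      have hht : ht γ = ht γ' := by
        rw [hins, ht, Finset.image_insert,
          Finset.insert_eq_self.2 (Finset.mem_image.2 ⟨p, hpmem', ht1.symm⟩)]
        rfl
      have hac : anticontent t = anticontent p + 1 := by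
        simp [anticontent]; omega
      rw [hwd, hht, hac]; push_cast; omega
    · -- up step : p = (t.1+1, t.2)
      have hp1 : p.1 = t.1 + 1 := by rw [hcase]
      have hp2 : p.2 = t.2 := by rw [hcase]
      have hwd : wd γ = wd γ' := by
        rw [hins, wd, Finset.image_insert,
          Finset.insert_eq_self.2 (Finset.mem_image.2 ⟨p, hpmem', hp2⟩)]
        rfl
      have hht : ht γ = ht γ' + 1 := by
        rw [hins, ht, Finset.image_insert, Finset.card_insert_of_notMem (by
          intro hc
          obtain ⟨y, hy, hy1⟩ := Finset.mem_image.1 hc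
          have := (hmono y hy).2; omega)]
        rfl
      have hac : anticontent t = anticontent p - 1 := by
        simp [anticontent]; omega
      rw [hwd, hht, hac]; push_cast; omega

/-- Γ₀ reformulated: the top end has anticontent one more than the bottom end -/
lemma gamma0_ac {γ : Finset Box} (hγ : InGammaZero γ)
    {t m : Box} (htmem : t ∈ γ) (htmax : ∀ y ∈ γ, content y ≤ content t)
    (hmmem : m ∈ γ) (hmin : ∀ y ∈ γ, content m ≤ content y) :
    anticontent t = anticontent m + 1 ∧ ∀ b ∈ γ, anticontent m ≤ anticontent b := by
  have h1 := ph_wd_ht γ.card γ rfl (hook_PH hγ.1) t htmem htmax m hmmem hmin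
  have h2 : (wd γ : ℤ) - ht γ = 1 := by rw [hγ.2.1]; push_cast; ring
  have h3 : ∀ b ∈ γ, anticontent m ≤ anticontent b := hγ.2.2 m hmmem hmin
  exact ⟨by omega, h3⟩

/-! ### Covering lemmas -/

lemma cov_notmem {S : Finset Box} {C : Finset (Finset Box)} (hC : IsCovering S C)
    {γ δ : Finset Box} (hγ : γ ∈ C) (hδ : δ ∈ C) (hne : γ ≠ δ) {x : Box} (hx : x ∈ γ) :
    x ∉ δ := by
  intro hxδ
  have hxS : x ∈ S := hC.2.1 γ hγ hx
  obtain ⟨ε, _, huniq⟩ := hC.2.2.1 x hxS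
  exact hne ((huniq γ ⟨hγ, hx⟩).trans (huniq δ ⟨hδ, hxδ⟩).symm)

lemma cov_owner {S : Finset Box} {C : Finset (Finset Box)} (hC : IsCovering S C)
    {x : Box} (hx : x ∈ S) : ∃ γ ∈ C, x ∈ γ := by
  obtain ⟨γ, ⟨h1, h2⟩, _⟩ := hC.2.2.1 x hx
  exact ⟨γ, h1, h2⟩

lemma cov_adj {S : Finset Box} {C : Finset (Finset Box)} (hC : IsCovering S C)
    {γ δ : Finset Box} (hγ : γ ∈ C) (hδ : δ ∈ C) (hne : γ ≠ δ)
    {x y : Box} (hx : x ∈ γ) (hy : y ∈ δ) (hadj : BoxAdj x y) :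
    NestedIn γ δ ∨ NestedIn δ γ := by
  rcases hC.2.2.2 γ hγ δ hδ hne with h | h | h
  · exact absurd hadj (h x hx y hy).2
  · exact Or.inl h
  · exact Or.inr h

/-- key: if γ is nested in δ then the diagonal successor of every box of γ is in δ -/
lemma nested_ds {S : Finset Box} {C : Finset (Finset Box)} (hC : IsCovering S C)
    {γ δ : Finset Box} (hγ : γ ∈ C) (hδ : δ ∈ C) (hne : γ ≠ δ) (hnest : NestedIn γ δ)
    {x : Box} (hx : x ∈ γ) : ds x ∈ δ := by
  have hhγ := hC.1 γ hγ
  have hhδ := hC.1 δ hδ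
  obtain ⟨hu, hv⟩ := hnest x hx
  have hdsct : content (ds x) = content x := ct_ds x
  have hdsnot : ds x ∉ γ := by
    intro h
    have heq := hhγ.2.2.2 (ds x) h x hx hdsct
    have h1 := congrArg Prod.fst heq
    simp [ds] at h1
  rcases hu with hu | hu
  · -- below box in γ
    obtain ⟨_, hv2⟩ := hnest _ hu
    rcases hv2 with h | h
    · exact absurd h hdsnot
    · exact h
  · rcases hv with hv | hv
    · -- right box in γ
      obtain ⟨hv2, _⟩ := hnest _ hv
      rcases hv2 with h | h
      · exact absurd h hdsnot
      · exact h
    · -- both u and v in δ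
      have hcu : content (x.1 + 1, x.2) = content x - 1 := by simp [content]; omega
      have hcv : content (x.1, x.2 + 1) = content x + 1 := by simp [content]; omega
      obtain ⟨y, hy, hyc⟩ := hook_between hhδ hu hv (c := content x) (by omega) (by omega)
      rcases hook_consec hhδ hu hy (by omega) with h | h
      · have : y = ds x := by rw [h]; rfl
        rwa [this] at hy
      · -- y = x, impossible
        have hyx : y = x := by
          have h1 : (x.1 + 1, x.2).1 = y.1 + 1 := by rw [h]
          have h2 : (x.1 + 1, x.2).2 = y.2 := by rw [h]
          simp at h1 h2
          exact Prod.ext h1.symm h2.symm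
        rw [hyx] at hy
        exact absurd hx (cov_notmem hC hδ hγ hne.symm hy)

/-- bottom boxes propagate to the right along a hook -/
lemma bot_prop_right {S : Finset Box} {C : Finset (Finset Box)} (hS : QS S)
    (hC : IsCovering S C) {γ : Finset Box} (hγ : γ ∈ C)
    {x x' : Box} (hx : x ∈ γ) (hx' : x' ∈ γ) (hct : content x' = content x + 1)
    (hbot : ds x ∉ S) : ds x' ∉ S := by
  have hhγ := hC.1 γ hγ
  intro hds
  rcases hook_consec hhγ hx hx' hct with h | h
  · -- x' right of x
    have hx'S : x' ∈ S := hC.2.1 γ hγ hx'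
    have hcontact := (qs_contact hS hx'S hds).1
    have heq : (x'.1 + 1, x'.2) = ds x := by
      have h1 : x'.1 = x.1 := by rw [h]
      have h2 : x'.2 = x.2 + 1 := by rw [h]
      simp [ds]; omega
    rw [heq] at hcontact
    exact hbot hcontact
  · -- x above x' : x = (x'.1+1, x'.2), w := ds x' = (x.1, x.2+1)
    have hw : ds x' = (x.1, x.2 + 1) := by
      rw [h]; rfl
    rw [hw] at hds
    obtain ⟨ε, hε, hwε⟩ := cov_owner hC hds
    have hwct : content (x.1, x.2 + 1) = content x + 1 := by simp [content]; omega
    have hwnotγ : (x.1, x.2 + 1) ∉ γ := by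
      intro hmem
      have := hhγ.2.2.2 _ hmem x' hx' (by omega)
      have hh1 : x.1 = x'.1 := by rw [← this]
      have := congrArg Prod.fst h
      simp at this
      omega
    have hεne : γ ≠ ε := by rintro rfl; exact hwnotγ hwε
    have hadj : BoxAdj x (x.1, x.2 + 1) := by left; exact ⟨rfl, Or.inl rfl⟩
    rcases cov_adj hC hγ hε hεne hx hwε hadj with hn | hn
    · exact hbot (hC.2.1 ε hε (nested_ds hC hγ hε hεne hn hx))
    · have hdsw : ds (x.1, x.2 + 1) ∈ γ := nested_ds hC hε hγ hεne.symm hn hwε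
      have := hhγ.2.2.2 _ hdsw x' hx' (by simp [content, ds] at *; omega)
      have h1 : (ds (x.1, x.2+1)).1 = x.1 + 1 := rfl
      have h2 : x'.1 = x.1 - 1 ∧ x.1 ≥ 1 := by
        have := congrArg Prod.fst h
        simp at this
        omega
      rw [this] at h1
      omega

/-- bottom boxes propagate to the left along a hook -/
lemma bot_prop_left {S : Finset Box} {C : Finset (Finset Box)} (hS : QS S)
    (hC : IsCovering S C) {γ : Finset Box} (hγ : γ ∈ C)
    {x x' : Box} (hx : x ∈ γ) (hx' : x' ∈ γ) (hct : content x' = content x - 1)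
    (hbot : ds x ∉ S) : ds x' ∉ S := by
  have hhγ := hC.1 γ hγ
  intro hds
  rcases hook_consec hhγ hx' hx (by omega) with h | h
  · -- x right of x' : x = (x'.1, x'.2+1), w := ds x' = (x.1+1, x.2)
    have hw : ds x' = (x.1 + 1, x.2) := by
      have h1 : x.1 = x'.1 := by rw [h]
      have h2 : x.2 = x'.2 + 1 := by rw [h]
      simp [ds]; omega
    rw [hw] at hds
    obtain ⟨ε, hε, hwε⟩ := cov_owner hC hds
    have hwct : content (x.1 + 1, x.2) = content x - 1 := by simp [content]; omega
    have hwnotγ : (x.1 + 1, x.2) ∉ γ := by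
      intro hmem
      have := hhγ.2.2.2 _ hmem x' hx' (by omega)
      have hh1 : x.1 + 1 = x'.1 := by rw [← this]
      have h1 : x.1 = x'.1 := by rw [h]
      omega
    have hεne : γ ≠ ε := by rintro rfl; exact hwnotγ hwε
    have hadj : BoxAdj x (x.1 + 1, x.2) := by right; exact ⟨rfl, Or.inl rfl⟩
    rcases cov_adj hC hγ hε hεne hx hwε hadj with hn | hn
    · exact hbot (hC.2.1 ε hε (nested_ds hC hγ hε hεne hn hx))
    · have hdsw : ds (x.1 + 1, x.2) ∈ γ := nested_ds hC hε hγ hεne.symm hn hwε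
      have := hhγ.2.2.2 _ hdsw x' hx' (by simp [content, ds] at *; omega)
      have h1 : (ds (x.1+1, x.2)).1 = x.1 + 2 := rfl
      have h2 : x'.1 = x.1 := by rw [h]
      rw [this] at h1
      omega
  · -- x' below x : x' = (x.1+1, x.2), ds x' = (x.1+2, x.2+1)
    have hx'S : x' ∈ S := hC.2.1 γ hγ hx'
    have hcontact := (qs_contact hS hx'S hds).2
    have : (x'.1, x'.2 + 1) = ds x := by
      have h1 : x'.1 = x.1 + 1 := by rw [h]
      have h2 : x'.2 = x.2 := by rw [h]
      simp [ds]; omega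
    rw [this] at hcontact
    exact hbot hcontact

/-- a hook owning a bottom box consists of bottom boxes -/
lemma bot_hook {S : Finset Box} {C : Finset (Finset Box)} (hS : QS S)
    (hC : IsCovering S C) {γ : Finset Box} (hγ : γ ∈ C)
    {x : Box} (hx : x ∈ γ) (hbot : ds x ∉ S) : ∀ y ∈ γ, ds y ∉ S := by
  have hhγ := hC.1 γ hγ
  have hright : ∀ n : ℕ, ∀ y ∈ γ, content y = content x + n → ds y ∉ S := by
    intro n
    induction n with
    | zero => intro y hy hc; rwa [hhγ.2.2.2 y hy x hx (by omega)]
    | succ n ih =>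
      intro y hy hc
      obtain ⟨w, hw, hwc⟩ := hook_between hhγ hx hy (c := content x + n) (by omega) (by omega)
      exact bot_prop_right hS hC hγ hw hy (by omega) (ih w hw hwc)
  have hleft : ∀ n : ℕ, ∀ y ∈ γ, content y = content x - n → ds y ∉ S := by
    intro n
    induction n with
    | zero => intro y hy hc; rwa [hhγ.2.2.2 y hy x hx (by omega)]
    | succ n ih =>
      intro y hy hc
      obtain ⟨w, hw, hwc⟩ := hook_between hhγ hy hx (c := content x - n) (by omega) (by omega)
      exact bot_prop_left hS hC hγ hw hy (by omega) (ih w hw hwc)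
  intro y hy
  rcases le_or_gt (content x) (content y) with h | h
  · obtain ⟨n, hn⟩ := Int.le.dest h
    exact hright n y hy (by omega)
  · obtain ⟨n, hn⟩ := Int.le.dest (le_of_lt h)
    exact hleft n y hy (by omega)

/-- bottoms of adjacent diagonals differ by one in anticontent -/
lemma bot_adjacent_diag {S : Finset Box} (hS : QS S) {x w : Box}
    (hx : x ∈ S) (hw : w ∈ S) (hbx : ds x ∉ S) (hbw : ds w ∉ S)
    (hct : content w = content x + 1) :
    anticontent w = anticontent x + 1 ∨ anticontent w = anticontent x - 1 := by
  by_contra hcon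
  push_neg at hcon
  obtain ⟨hc1, hc2⟩ := hcon
  simp only [content, anticontent] at hct hc1 hc2
  rcases le_or_gt (anticontent x + 3) (anticontent w) with hge | hlt
  · -- w at least 3 lower : derive ds x ∈ S
    simp only [anticontent] at hge
    have hw1 : x.1 + 1 ≤ w.1 := by omega
    have hw2 : x.2 + 2 ≤ w.2 := by omega
    have h1 : (w.1, x.2) ∈ S := hS.sw x hx w hw (by omega) (by omega)
    have h2 : (x.1 + 1, x.2) ∈ S := hS.col x hx (w.1, x.2) h1 rfl (x.1+1) (by omega) (by omega)
    have h3 : (x.1 + 1, w.2) ∈ S := hS.ne (x.1+1, x.2) h2 w hw (by omega) (by omega)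
    have h4 : (x.1 + 1, x.2 + 1) ∈ S :=
      hS.row (x.1+1, x.2) h2 (x.1+1, w.2) h3 rfl (x.2+1) (by omega) (by omega)
    exact hbx h4
  · -- w at least 3 higher : derive ds w ∈ S
    simp only [anticontent] at hlt
    have hw1 : w.1 + 2 ≤ x.1 := by omega
    have hw2 : w.2 + 1 ≤ x.2 := by omega
    have h1 : (x.1, w.2) ∈ S := hS.sw w hw x hx (by omega) (by omega)
    have h2 : (w.1 + 1, w.2) ∈ S := hS.col w hw (x.1, w.2) h1 rfl (w.1+1) (by omega) (by omega)
    have h0 : (w.1, x.2) ∈ S := hS.ne w hw x hx (by omega) (by omega)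
    have h3 : (w.1 + 1, x.2) ∈ S := hS.col (w.1, x.2) h0 x hx rfl (w.1+1) (by omega) (by omega)
    have h4 : (w.1 + 1, w.2 + 1) ∈ S :=
      hS.row (w.1+1, w.2) h2 (w.1+1, x.2) h3 rfl (w.2+1) (by omega) (by omega)
    exact hbw h4

/-- a diagonal has a unique bottom box -/
lemma dia_bot {S : Finset Box} {c : ℤ} (h : ∃ x ∈ S, content x = c) :
    ∃ b ∈ S, content b = c ∧ ds b ∉ S ∧ ∀ y ∈ S, content y = c → anticontent y ≤ anticontent b := by
  obtain ⟨x0, hx0, hx0c⟩ := h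
  obtain ⟨b, hb, hbmax⟩ := Finset.exists_max_image (S.filter (fun x => content x = c)) anticontent
    ⟨x0, Finset.mem_filter.2 ⟨hx0, hx0c⟩⟩
  obtain ⟨hbS, hbc⟩ := Finset.mem_filter.1 hb
  refine ⟨b, hbS, hbc, ?_, ?_⟩
  · intro hds
    have := hbmax (ds b) (Finset.mem_filter.2 ⟨hds, by rw [ct_ds, hbc]⟩)
    rw [ac_ds] at this
    omega
  · intro y hy hyc
    exact hbmax y (Finset.mem_filter.2 ⟨hy, hyc⟩)

/-- a bottom hook cannot stop while the next diagonal is nonempty (right end) -/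
lemma run_max_right {S : Finset Box} {C : Finset (Finset Box)} (hS : QS S)
    (hC : IsCovering S C) {γ : Finset Box} (hγ : γ ∈ C)
    {x : Box} (hx : x ∈ γ) (htop : ∀ y ∈ γ, content y ≤ content x)
    (hbots : ∀ y ∈ γ, ds y ∉ S)
    {w0 : Box} (hw0 : w0 ∈ S) (hct0 : content w0 = content x + 1) : False := by
  obtain ⟨w, hwS, hwc, hwbot, _⟩ := dia_bot ⟨w0, hw0, hct0⟩
  have hxS : x ∈ S := hC.2.1 γ hγ hx
  have hac := bot_adjacent_diag hS hxS hwS (hbots x hx) hwbot hwc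
  have hadj : BoxAdj x w := boxadj_iff.2 ⟨Or.inl (by omega), by omega⟩
  obtain ⟨ε, hε, hwε⟩ := cov_owner hC hwS
  have hne : γ ≠ ε := by
    rintro rfl
    have := htop w hwε
    omega
  rcases cov_adj hC hγ hε hne hx hwε hadj with hn | hn
  · exact hbots x hx (hC.2.1 ε hε (nested_ds hC hγ hε hne hn hx))
  · have := nested_ds hC hε hγ hne.symm hn hwε
    have := htop (ds w) this
    rw [ct_ds] at this
    omega

/-- a bottom hook cannot stop while the previous diagonal is nonempty (left end) -/
lemma run_max_left {S : Finset Box} {C : Finset (Finset Box)} (hS : QS S)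
    (hC : IsCovering S C) {γ : Finset Box} (hγ : γ ∈ C)
    {x : Box} (hx : x ∈ γ) (hmin : ∀ y ∈ γ, content x ≤ content y)
    (hbots : ∀ y ∈ γ, ds y ∉ S)
    {w0 : Box} (hw0 : w0 ∈ S) (hct0 : content w0 = content x - 1) : False := by
  obtain ⟨w, hwS, hwc, hwbot, _⟩ := dia_bot ⟨w0, hw0, hct0⟩
  have hxS : x ∈ S := hC.2.1 γ hγ hx
  have hac := bot_adjacent_diag hS hwS hxS hwbot (hbots x hx) (by omega)
  have hadj : BoxAdj x w := boxadj_iff.2 ⟨Or.inr (by omega), by omega⟩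
  obtain ⟨ε, hε, hwε⟩ := cov_owner hC hwS
  have hne : γ ≠ ε := by
    rintro rfl
    have := hmin w hwε
    omega
  rcases cov_adj hC hγ hε hne hx hwε hadj with hn | hn
  · exact hbots x hx (hC.2.1 ε hε (nested_ds hC hγ hε hne hn hx))
  · have := nested_ds hC hε hγ hne.symm hn hwε
    have := hmin (ds w) this
    rw [ct_ds] at this
    omega

/-! ### Diagonal profiles and peeling -/

def Dia (S : Finset Box) (c : ℤ) : Finset Box := S.filter (fun x => content x = c)

def Ncd (S : Finset Box) (c : ℤ) : ℕ := (Dia S c).card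

noncomputable def BAC (S : Finset Box) (c : ℤ) : ℤ :=
  if h : (Dia S c).Nonempty then ((Dia S c).image anticontent).max' (h.image _) else 0

lemma dia_mem {S : Finset Box} {c : ℤ} {x : Box} : x ∈ Dia S c ↔ x ∈ S ∧ content x = c :=
  Finset.mem_filter

lemma ncd_pos {S : Finset Box} {c : ℤ} : 1 ≤ Ncd S c ↔ ∃ x ∈ S, content x = c := by
  constructor
  · intro h
    obtain ⟨x, hx⟩ := Finset.card_pos.1 h
    exact ⟨x, (dia_mem.1 hx).1, (dia_mem.1 hx).2⟩
  · rintro ⟨x, h1, h2⟩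
    exact Finset.card_pos.2 ⟨x, dia_mem.2 ⟨h1, h2⟩⟩

lemma bac_eq {S : Finset Box} {c : ℤ} {b : Box} (hb : b ∈ S) (hc : content b = c)
    (hmax : ∀ y ∈ S, content y = c → anticontent y ≤ anticontent b) :
    BAC S c = anticontent b := by
  have hne : (Dia S c).Nonempty := ⟨b, dia_mem.2 ⟨hb, hc⟩⟩
  rw [BAC, dif_pos hne]
  apply le_antisymm
  · apply Finset.max'_le
    intro y hy
    obtain ⟨z, hz, rfl⟩ := Finset.mem_image.1 hy
    exact hmax z (dia_mem.1 hz).1 (dia_mem.1 hz).2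
  · exact Finset.le_max' _ _ (Finset.mem_image.2 ⟨b, dia_mem.2 ⟨hb, hc⟩, rfl⟩)

/-- the unique bottom box of a nonempty diagonal -/
lemma dia_bot_full {S : Finset Box} (hS : QS S) {c : ℤ} (h : ∃ x ∈ S, content x = c) :
    ∃ b ∈ S, content b = c ∧ ds b ∉ S ∧ anticontent b = BAC S c ∧
      (∀ y ∈ S, content y = c → anticontent y ≤ anticontent b) ∧
      (∀ y ∈ S, content y = c → ds y ∉ S → y = b) := by
  obtain ⟨b, hbS, hbc, hbds, hbmax⟩ := dia_bot h
  refine ⟨b, hbS, hbc, hbds, (bac_eq hbS hbc hbmax).symm, hbmax, ?_⟩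
  intro y hy hyc hyds
  by_contra hne
  have hlt : anticontent y < anticontent b := by
    rcases lt_or_eq_of_le (hbmax y hy hyc) with h | h
    · exact h
    · exact absurd (box_ext (by omega) h) hne
  have hrow : y.1 < b.1 := by
    simp [content, anticontent] at hbc hyc hlt ⊢
    omega
  exact hyds (qs_diag_step hS hy hbS (by omega) hrow)

def peel (S : Finset Box) : Finset Box := S.filter (fun x => ds x ∈ S)

lemma peel_mem {S : Finset Box} {x : Box} : x ∈ peel S ↔ x ∈ S ∧ ds x ∈ S := Finset.mem_filter

lemma peel_qs {S : Finset Box} (hS : QS S) : QS (peel S) := by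
  constructor
  · intro x hx y hy h1 h2
    obtain ⟨hx1, hx2⟩ := peel_mem.1 hx
    obtain ⟨hy1, hy2⟩ := peel_mem.1 hy
    refine peel_mem.2 ⟨hS.ne x hx1 y hy1 h1 h2, ?_⟩
    exact hS.ne (ds x) hx2 (ds y) hy2 (by simp [ds]; omega) (by simp [ds]; omega)
  · intro x hx y hy h1 h2
    obtain ⟨hx1, hx2⟩ := peel_mem.1 hx
    obtain ⟨hy1, hy2⟩ := peel_mem.1 hy
    refine peel_mem.2 ⟨hS.sw x hx1 y hy1 h1 h2, ?_⟩
    exact hS.sw (ds x) hx2 (ds y) hy2 (by simp [ds]; omega) (by simp [ds]; omega)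
  · intro x hx y hy hr cc h1 h2
    obtain ⟨hx1, hx2⟩ := peel_mem.1 hx
    obtain ⟨hy1, hy2⟩ := peel_mem.1 hy
    refine peel_mem.2 ⟨hS.row x hx1 y hy1 hr cc h1 h2, ?_⟩
    have := hS.row (ds x) hx2 (ds y) hy2 (by simp [ds]; omega) (cc+1) (by simp [ds]; omega)
      (by simp [ds]; omega)
    simpa [ds] using this
  · intro x hx y hy hcc rr h1 h2
    obtain ⟨hx1, hx2⟩ := peel_mem.1 hx
    obtain ⟨hy1, hy2⟩ := peel_mem.1 hy
    refine peel_mem.2 ⟨hS.col x hx1 y hy1 hcc rr h1 h2, ?_⟩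
    have := hS.col (ds x) hx2 (ds y) hy2 (by simp [ds]; omega) (rr+1) (by simp [ds]; omega)
      (by simp [ds]; omega)
    simpa [ds] using this

lemma dia_peel {S : Finset Box} (hS : QS S) {c : ℤ} {b : Box}
    (hb : b ∈ S) (hc : content b = c)
    (hmax : ∀ y ∈ S, content y = c → anticontent y ≤ anticontent b) :
    Dia (peel S) c = (Dia S c).erase b := by
  ext x
  rw [dia_mem, Finset.mem_erase, dia_mem, peel_mem]
  constructor
  · rintro ⟨⟨h1, h2⟩, h3⟩
    refine ⟨?_, h1, h3⟩
    rintro rfl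
    have := hmax (ds x) h2 (by rw [ct_ds]; exact h3)
    rw [ac_ds] at this
    omega
  · rintro ⟨h1, h2, h3⟩
    refine ⟨⟨h2, ?_⟩, h3⟩
    have hlt : anticontent x < anticontent b := by
      rcases lt_or_eq_of_le (hmax x h2 h3) with h | h
      · exact h
      · exact absurd (box_ext (by omega) h) h1
    have hrow : x.1 < b.1 := by
      simp [content, anticontent] at hc h3 hlt ⊢
      omega
    exact qs_diag_step hS h2 hb (by omega) hrow

lemma ncd_peel {S : Finset Box} (hS : QS S) {c : ℤ} (h : 1 ≤ Ncd S c) :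
    Ncd (peel S) c + 1 = Ncd S c := by
  obtain ⟨b, hbS, hbc, _, _, hbmax, _⟩ := dia_bot_full hS (ncd_pos.1 h)
  rw [Ncd, dia_peel hS hbS hbc hbmax, Finset.card_erase_of_mem (dia_mem.2 ⟨hbS, hbc⟩)]
  simp only [Ncd] at h ⊢
  omega

lemma ncd_peel_zero {S : Finset Box} {c : ℤ} (h : Ncd S c = 0) : Ncd (peel S) c = 0 := by
  rw [Ncd, Finset.card_eq_zero] at h ⊢
  rw [Finset.eq_empty_iff_forall_notMem] at h ⊢
  intro x hx
  exact h x (dia_mem.2 ⟨(peel_mem.1 (dia_mem.1 hx).1).1, (dia_mem.1 hx).2⟩)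

lemma bac_peel {S : Finset Box} (hS : QS S) {c : ℤ} (h : 2 ≤ Ncd S c) :
    BAC (peel S) c = BAC S c - 2 := by
  obtain ⟨b, hbS, hbc, hbds, hbac, hbmax, _⟩ := dia_bot_full hS (ncd_pos.1 (le_trans one_le_two h))
  -- find a second box on the diagonal
  have h2 : ∃ y ∈ Dia S c, y ≠ b := by
    by_contra hcon
    push_neg at hcon
    have hsub : Dia S c ⊆ {b} := fun y hy => Finset.mem_singleton.2 (hcon y hy)
    have hcc := Finset.card_le_card hsub
    simp only [Ncd] at h
    simp at hcc
    omega
  obtain ⟨y, hy, hyne⟩ := h2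
  obtain ⟨hyS, hyc⟩ := dia_mem.1 hy
  have hylt : y.1 < b.1 := by
    have hle := hbmax y hyS hyc
    rcases lt_or_eq_of_le hle with h | h
    · simp [content, anticontent] at hyc hbc h ⊢; omega
    · exact absurd (box_ext (by omega) h) hyne
  -- the box just above b
  have hb1 : 1 ≤ b.1 := by omega
  have hbb : (b.1 - 1, b.1 - 1 + y.2 - y.1) ∈ S :=
    qs_diag_closure hS hyS hbS (by omega) (b.1 - 1) (by omega) (by omega)
  set b' : Box := (b.1 - 1, b.1 - 1 + y.2 - y.1) with hb'
  have hdsb' : ds b' = b := by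
    have hbig : b.1 - 1 + y.2 - y.1 + 1 = b.2 := by
      simp [content] at hbc hyc
      omega
    apply Prod.ext
    · simp [ds, hb']; omega
    · simpa [ds, hb'] using hbig
  have hb'c : content b' = c := by
    simp [content, hb'] at hbc hyc ⊢
    omega
  have hb'peel : b' ∈ peel S := peel_mem.2 ⟨hbb, by rw [hdsb']; exact hbS⟩
  have hb'max : ∀ z ∈ peel S, content z = c → anticontent z ≤ anticontent b' := by
    intro z hz hzc
    obtain ⟨hz1, hz2⟩ := peel_mem.1 hz
    have := hbmax (ds z) hz2 (by rw [ct_ds]; exact hzc)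
    rw [ac_ds] at this
    have hac : anticontent b' = anticontent b - 2 := by
      rw [← hdsb', ac_ds]; ring
    omega
  rw [bac_eq hb'peel hb'c hb'max, ← hbac, ← hdsb', ac_ds]
  ring

/-! ### Peeling the covering, and the structure theorem -/

lemma peel_cov {S : Finset Box} {C : Finset (Finset Box)} (hS : QS S) (hC : IsCovering S C) :
    IsCovering (peel S) (C.filter (fun γ => γ ⊆ peel S)) := by
  refine ⟨?_, ?_, ?_, ?_⟩
  · intro γ hγ
    exact hC.1 γ (Finset.mem_filter.1 hγ).1
  · intro γ hγ
    exact (Finset.mem_filter.1 hγ).2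
  · intro b hb
    obtain ⟨hbS, hbds⟩ := peel_mem.1 hb
    obtain ⟨γ, hγ, hbγ⟩ := cov_owner hC hbS
    have hsub : γ ⊆ peel S := by
      intro y hy
      refine peel_mem.2 ⟨hC.2.1 γ hγ hy, ?_⟩
      by_contra hyds
      exact (bot_hook hS hC hγ hy hyds) b hbγ hbds
    refine ⟨γ, ⟨Finset.mem_filter.2 ⟨hγ, hsub⟩, hbγ⟩, ?_⟩
    rintro γ' ⟨hγ', hbγ'⟩
    obtain ⟨ε, _, huniq⟩ := hC.2.2.1 b hbS
    exact (huniq γ' ⟨(Finset.mem_filter.1 hγ').1, hbγ'⟩).trans (huniq γ ⟨hγ, hbγ⟩).symm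
  · intro γ hγ δ hδ hne
    exact hC.2.2.2 γ (Finset.mem_filter.1 hγ).1 δ (Finset.mem_filter.1 hδ).1 hne

theorem struct_thm : ∀ (k : ℕ) (S : Finset Box) (C : Finset (Finset Box)),
    QS S → IsCovering S C → (∀ γ ∈ C, InGammaZero γ) → ∀ l r : ℤ, l ≤ r →
    (∀ c, l ≤ c → c ≤ r → (k : ℕ) + 1 ≤ Ncd S c) → Ncd S (l-1) ≤ k → Ncd S (r+1) ≤ k →
    Odd (r - l) ∧ BAC S r = BAC S l + 1 ∧ ∀ c, l ≤ c → c ≤ r → BAC S l ≤ BAC S c := by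
  intro k
  induction k with
  | zero =>
    intro S C hS hC hG l r hlr hrun hl hr
    obtain ⟨b, hbS, hbc, hbds, hbac, hbmax, hbuniq⟩ :=
      dia_bot_full hS (ncd_pos.1 (hrun l le_rfl hlr))
    obtain ⟨γ, hγ, hbγ⟩ := cov_owner hC hbS
    have hhγ := hC.1 γ hγ
    have hbots := bot_hook hS hC hγ hbγ hbds
    obtain ⟨t, htmem, htmax⟩ := hook_top hhγ
    obtain ⟨m, hmmem, hmmin⟩ := hook_bot hhγ
    -- content of m is l
    have hml : content m = l := by
      rcases lt_or_ge (content m) l with hlt | hge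
      · exfalso
        obtain ⟨w, hw, hwc⟩ := hook_between hhγ hmmem hbγ (c := l - 1) (by omega) (by omega)
        have : 1 ≤ Ncd S (l-1) := ncd_pos.2 ⟨w, hC.2.1 γ hγ hw, hwc⟩
        omega
      · have := hmmin b hbγ
        omega
    -- m is the bottom box of diagonal l, so m = b
    have hmb : m = b := hbuniq m (hC.2.1 γ hγ hmmem) hml (hbots m hmmem)
    -- content of t is r
    have htr : content t = r := by
      rcases lt_or_ge (content t) r with hlt | hge
      · exfalso
        have hbt : content b ≤ content t := htmax b hbγ
        obtain ⟨w0, hw0S, hw0c⟩ := ncd_pos.1 (hrun (content t + 1) (by omega) (by omega))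
        exact run_max_right hS hC hγ htmem htmax hbots hw0S hw0c
      · rcases eq_or_lt_of_le hge with h | h
        · omega
        · exfalso
          obtain ⟨w, hw, hwc⟩ := hook_between hhγ hbγ htmem (c := r + 1) (by omega) (by omega)
          have : 1 ≤ Ncd S (r+1) := ncd_pos.2 ⟨w, hC.2.1 γ hγ hw, hwc⟩
          omega
    -- t is the bottom box of diagonal r
    have htS : t ∈ S := hC.2.1 γ hγ htmem
    obtain ⟨bt, hbtS, hbtc, hbtds, hbtac, hbtmax, hbtuniq⟩ :=
      dia_bot_full hS ⟨t, htS, htr⟩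
    have htbt : t = bt := hbtuniq t htS htr (hbots t htmem)
    have hBr : BAC S r = anticontent t := by rw [htbt]; omega
    have hBl : BAC S l = anticontent m := by rw [hmb]; omega
    obtain ⟨hac1, hacmin⟩ := gamma0_ac (hG γ hγ) htmem htmax hmmem hmmin
    refine ⟨?_, ?_, ?_⟩
    · -- parity
      refine ⟨m.1 - t.1, ?_⟩
      have e1 : anticontent t - (content t) = 2 * t.1 := by simp [anticontent, content]; ring
      have e2 : anticontent m - (content m) = 2 * m.1 := by simp [anticontent, content]; ring
      omega
    · omega
    · intro c hc1 hc2
      obtain ⟨y, hy, hyc⟩ := hook_between hhγ hmmem htmem (c := c) (by omega) (by omega)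
      have hyS : y ∈ S := hC.2.1 γ hγ hy
      obtain ⟨by', hby'S, hby'c, hby'ds, hby'ac, _, hby'uniq⟩ := dia_bot_full hS ⟨y, hyS, hyc⟩
      have : y = by' := hby'uniq y hyS hyc (hbots y hy)
      have hBc : BAC S c = anticontent y := by rw [this]; omega
      have := hacmin y hy
      omega
  | succ k ih =>
    intro S C hS hC hG l r hlr hrun hl hr
    have hS' := peel_qs hS
    have hC' := peel_cov hS hC
    have hG' : ∀ γ ∈ C.filter (fun γ => γ ⊆ peel S), InGammaZero γ := by
      intro γ hγ
      exact hG γ (Finset.mem_filter.1 hγ).1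
    have hrun' : ∀ c, l ≤ c → c ≤ r → (k : ℕ) + 1 ≤ Ncd (peel S) c := by
      intro c h1 h2
      have h3 := hrun c h1 h2
      have := ncd_peel hS (c := c) (by omega)
      omega
    have hl' : Ncd (peel S) (l-1) ≤ k := by
      rcases Nat.eq_zero_or_pos (Ncd S (l-1)) with h | h
      · rw [ncd_peel_zero h]; omega
      · have := ncd_peel hS (c := l-1) h
        omega
    have hr' : Ncd (peel S) (r+1) ≤ k := by
      rcases Nat.eq_zero_or_pos (Ncd S (r+1)) with h | h
      · rw [ncd_peel_zero h]; omega
      · have := ncd_peel hS (c := r+1) h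
        omega
    obtain ⟨hodd, hbac, hmin⟩ := ih (peel S) _ hS' hC' hG' l r hlr hrun' hl' hr'
    have hbp : ∀ c, l ≤ c → c ≤ r → BAC (peel S) c = BAC S c - 2 := by
      intro c h1 h2
      exact bac_peel hS (by have := hrun c h1 h2; omega)
    have hbpl := hbp l le_rfl hlr
    have hbpr := hbp r hlr le_rfl
    refine ⟨hodd, by omega, ?_⟩
    intro c h1 h2
    have := hmin c h1 h2
    have := hbp c h1 h2
    omega

/-! ### Maximal run extraction -/

lemma ncd_zero_of_small {S : Finset Box} {c : ℤ}
    (h : ∀ x ∈ S, c < content x) : Ncd S c = 0 := by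
  rw [Ncd, Finset.card_eq_zero, Finset.eq_empty_iff_forall_notMem]
  intro x hx
  have := h x (dia_mem.1 hx).1
  have := (dia_mem.1 hx).2
  omega

lemma ncd_zero_of_big {S : Finset Box} {c : ℤ}
    (h : ∀ x ∈ S, content x < c) : Ncd S c = 0 := by
  rw [Ncd, Finset.card_eq_zero, Finset.eq_empty_iff_forall_notMem]
  intro x hx
  have := h x (dia_mem.1 hx).1
  have := (dia_mem.1 hx).2
  omega

lemma exists_run (S : Finset Box) (k : ℕ) {c0 : ℤ} (h : (k:ℕ) + 1 ≤ Ncd S c0) :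
    ∃ l r : ℤ, l ≤ c0 ∧ c0 ≤ r ∧ (∀ c, l ≤ c → c ≤ r → (k:ℕ) + 1 ≤ Ncd S c) ∧
      Ncd S (l-1) ≤ k ∧ Ncd S (r+1) ≤ k := by
  have hSne : S.Nonempty := by
    obtain ⟨x, hx, _⟩ := ncd_pos.1 (le_trans (by omega) h)
    exact ⟨x, hx⟩
  obtain ⟨xm, hxm, hxmmin⟩ := Finset.exists_min_image S content hSne
  obtain ⟨xM, hxM, hxMmax⟩ := Finset.exists_max_image S content hSne
  obtain ⟨g, ⟨hg1, hg2⟩, hgmax⟩ := Int.exists_greatest_of_bdd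
    (P := fun z => z ≤ c0 ∧ Ncd S z ≤ k)
    ⟨c0, fun z hz => hz.1⟩
    ⟨min (content xm - 1) c0, min_le_right _ _, by
      have h0 : Ncd S (min (content xm - 1) c0) = 0 := ncd_zero_of_small (by
        intro x hx
        have := hxmmin x hx
        omega)
      omega⟩
  obtain ⟨g', ⟨hg'1, hg'2⟩, hg'min⟩ := Int.exists_least_of_bdd
    (P := fun z => c0 ≤ z ∧ Ncd S z ≤ k)
    ⟨c0, fun z hz => hz.1⟩
    ⟨max (content xM + 1) c0, le_max_right _ _, by
      have h0 : Ncd S (max (content xM + 1) c0) = 0 := ncd_zero_of_big (by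
        intro x hx
        have := hxMmax x hx
        omega)
      omega⟩
  have hgc0 : g < c0 := by
    rcases eq_or_lt_of_le hg1 with h1 | h1
    · subst h1; omega
    · exact h1
  have hg'c0 : c0 < g' := by
    rcases eq_or_lt_of_le hg'1 with h1 | h1
    · rw [← h1] at hg'2; omega
    · exact h1
  refine ⟨g + 1, g' - 1, by omega, by omega, ?_, by simpa using hg2, by
    have he : g' - 1 + 1 = g' := by ring
    rw [he]; exact hg'2⟩
  intro c hc1 hc2
  by_contra hcon
  push_neg at hcon
  rcases le_or_gt c c0 with h1 | h1
  · have := hgmax c ⟨h1, by omega⟩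
    omega
  · have := hg'min c ⟨le_of_lt h1, by omega⟩
    omega

/-! ### Diagonal profile from the top box -/

lemma diag_profile {S : Finset Box} (hQ : QS S) {x : Box} (hx : x ∈ S)
    (htop : ∀ y ∈ S, content y = content x → anticontent x ≤ anticontent y) :
    BAC S (content x) = anticontent x + 2 * ((Ncd S (content x) : ℤ) - 1) := by
  obtain ⟨b, hbS, hbc, hbds, hbac, hbmax, _⟩ := dia_bot_full hQ (S := S) ⟨x, hx, rfl⟩
  have hrow_le : ∀ y ∈ S, content y = content x → x.1 ≤ y.1 ∧ y.1 ≤ b.1 := by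
    intro y hy hyc
    have h1 := htop y hy hyc
    have h2 := hbmax y hy hyc
    simp [content, anticontent] at hyc hbc h1 h2 ⊢
    omega
  have hxb := hrow_le x hx rfl
  have hdia_eq : Dia S (content x) =
      (Finset.Icc x.1 b.1).image (fun ρ => ((ρ, ρ + x.2 - x.1) : Box)) := by
    ext y
    rw [dia_mem, Finset.mem_image]
    constructor
    · rintro ⟨hyS, hyc⟩
      obtain ⟨hr1, hr2⟩ := hrow_le y hyS hyc
      refine ⟨y.1, Finset.mem_Icc.2 ⟨hr1, hr2⟩, ?_⟩
      apply Prod.ext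
      · rfl
      · simp [content] at hyc
        simp
        omega
    · rintro ⟨ρ, hρ, rfl⟩
      rw [Finset.mem_Icc] at hρ
      refine ⟨qs_diag_closure hQ hx hbS (by omega) ρ hρ.1 (hρ.2.trans ?_), ?_⟩
      · exact le_rfl
      · simp [content]
        simp [content] at hbc
        omega
  have hcard : Ncd S (content x) = b.1 + 1 - x.1 := by
    rw [Ncd, hdia_eq, Finset.card_image_of_injOn, Nat.card_Icc]
    intro a _ b' _ hab
    have := congrArg Prod.fst hab
    simpa using this
  have hacb : anticontent b = anticontent x + 2 * ((b.1 : ℤ) - x.1) := by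
    simp [content, anticontent] at hbc ⊢
    omega
  rw [← hbac, hacb, hcard]
  have := hxb.2
  push_cast [Nat.cast_sub]
  omega

/-! ### Main theorem -/

theorem main_contra (ν κ : Finset Box) (i j : ℕ)
    (h1 : (i, j) ∉ ν) (h2 : (i + 1, j) ∉ ν)
    (hκν : κ = insert (i, j) (insert (i + 1, j) ν))
    (habove : ∀ b ∈ ν, ¬ (b.2 = j ∧ b.1 ≤ i + 1))
    (hleft : ∀ b ∈ ν, ¬ ((b.1 = i ∨ b.1 = i + 1) ∧ b.2 < j))
    (hκg : InGamma κ) (hνg : InGamma ν) : False := by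
  obtain ⟨hκskew, Cκ, hCκ, hGκ⟩ := hκg
  obtain ⟨hνskew, Cν, hCν, hGν⟩ := hνg
  have hQκ := isSkew_qs hκskew
  have hQν := isSkew_qs hνskew
  set d1 : Box := (i, j) with hd1
  set d2 : Box := (i + 1, j) with hd2
  have hmemκ : ∀ x : Box, x ∈ κ ↔ x = d1 ∨ x = d2 ∨ x ∈ ν := by
    intro x; rw [hκν]; simp [hd1, hd2]
  have hd1κ : d1 ∈ κ := (hmemκ d1).2 (Or.inl rfl)
  have hd2κ : d2 ∈ κ := (hmemκ d2).2 (Or.inr (Or.inl rfl))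
  set cstar : ℤ := (j : ℤ) - i with hcstar
  set astar : ℤ := (i : ℤ) + j with hastar
  have hctd1 : content d1 = cstar := by simp [content, hd1, hcstar]
  have hctd2 : content d2 = cstar - 1 := by simp [content, hd2, hcstar]; ring
  have hacd1 : anticontent d1 = astar := by simp [anticontent, hd1, hastar]
  have hacd2 : anticontent d2 = astar + 1 := by simp [anticontent, hd2, hastar]; ring
  -- the corner exclusion
  have hexcl : ∀ x : Box, x ∈ κ → (x.1 : ℤ) ≤ (i : ℤ) + 1 → (x.2 : ℤ) < j → False := by
    intro x hx hr hc
    rcases (hmemκ x).1 hx with rfl | rfl | hxν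
    · simp [hd1] at hc
    · simp [hd2] at hc
    · rcases lt_or_ge x.1 i with hlt | hge
      · have hne : (x.1, j) ∈ κ := hQκ.ne x hx d1 hd1κ (by simp [hd1]; omega) (by simp [hd1]; omega)
        rcases (hmemκ _).1 hne with he | he | he
        · have := congrArg Prod.fst he; simp [hd1] at this; omega
        · have := congrArg Prod.fst he; simp [hd2] at this; omega
        · exact habove _ he ⟨rfl, by simp; omega⟩
      · exact hleft x hxν ⟨by omega, by omega⟩
  have hf2 : ∀ x ∈ κ, content x = cstar → astar ≤ anticontent x := by
    intro x hx hc
    by_contra hcon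
    push_neg at hcon
    simp [content, anticontent, hcstar, hastar] at hc hcon
    exact hexcl x hx (by omega) (by omega)
  have hf3 : ∀ x ∈ κ, content x = cstar - 1 → astar + 1 ≤ anticontent x := by
    intro x hx hc
    by_contra hcon
    push_neg at hcon
    simp [content, anticontent, hcstar, hastar] at hc hcon
    exact hexcl x hx (by omega) (by omega)
  have hf4 : ∀ x ∈ κ, content x = cstar - 2 → astar + 2 ≤ anticontent x := by
    intro x hx hc
    by_contra hcon
    push_neg at hcon
    simp [content, anticontent, hcstar, hastar] at hc hcon
    exact hexcl x hx (by omega) (by omega)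
  -- diagonal transfer away from the domino
  have hdia : ∀ c : ℤ, c ≠ cstar → c ≠ cstar - 1 → Dia κ c = Dia ν c := by
    intro c hc1 hc2
    ext x
    rw [dia_mem, dia_mem]
    constructor
    · rintro ⟨hx, hxc⟩
      rcases (hmemκ x).1 hx with rfl | rfl | hxν
      · rw [hctd1] at hxc; exact absurd hxc.symm hc1
      · rw [hctd2] at hxc; exact absurd hxc.symm hc2
      · exact ⟨hxν, hxc⟩
    · rintro ⟨hx, hxc⟩
      exact ⟨(hmemκ x).2 (Or.inr (Or.inr hx)), hxc⟩
  have hNeq : ∀ c : ℤ, c ≠ cstar → c ≠ cstar - 1 → Ncd κ c = Ncd ν c := by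
    intro c hc1 hc2; rw [Ncd, Ncd, hdia c hc1 hc2]
  have hBeq : ∀ c : ℤ, c ≠ cstar → c ≠ cstar - 1 → BAC κ c = BAC ν c := by
    intro c hc1 hc2; simp only [BAC, hdia c hc1 hc2]
  set n1 : ℕ := Ncd ν cstar with hn1
  set n0 : ℕ := Ncd ν (cstar - 1) with hn0
  have hNk1 : Ncd κ cstar = n1 + 1 := by
    have he : Dia κ cstar = insert d1 (Dia ν cstar) := by
      ext x
      rw [dia_mem, Finset.mem_insert, dia_mem]
      constructor
      · rintro ⟨hx, hxc⟩
        rcases (hmemκ x).1 hx with rfl | rfl | hxν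
        · exact Or.inl rfl
        · rw [hctd2] at hxc; omega
        · exact Or.inr ⟨hxν, hxc⟩
      · rintro (rfl | ⟨hx, hxc⟩)
        · exact ⟨hd1κ, hctd1⟩
        · exact ⟨(hmemκ x).2 (Or.inr (Or.inr hx)), hxc⟩
    rw [Ncd, he, Finset.card_insert_of_notMem (fun hc => h1 (dia_mem.1 hc).1)]
    rfl
  have hNk0 : Ncd κ (cstar - 1) = n0 + 1 := by
    have he : Dia κ (cstar - 1) = insert d2 (Dia ν (cstar - 1)) := by
      ext x
      rw [dia_mem, Finset.mem_insert, dia_mem]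
      constructor
      · rintro ⟨hx, hxc⟩
        rcases (hmemκ x).1 hx with rfl | rfl | hxν
        · rw [hctd1] at hxc; omega
        · exact Or.inl rfl
        · exact Or.inr ⟨hxν, hxc⟩
      · rintro (rfl | ⟨hx, hxc⟩)
        · exact ⟨hd2κ, hctd2⟩
        · exact ⟨(hmemκ x).2 (Or.inr (Or.inr hx)), hxc⟩
    rw [Ncd, he, Finset.card_insert_of_notMem (fun hc => h2 (dia_mem.1 hc).1)]
    rfl
  -- BAC values at the domino diagonals
  have hBκ1 : BAC κ cstar = astar + 2 * (n1 : ℤ) := by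
    have := diag_profile hQκ hd1κ (fun y hy hyc => by
      rw [hacd1]; exact hf2 y hy (by rw [← hctd1]; exact hyc))
    rw [hctd1, hacd1, hNk1] at this
    rw [this]; push_cast; ring
  have hBκ0 : BAC κ (cstar - 1) = astar + 1 + 2 * (n0 : ℤ) := by
    have := diag_profile hQκ hd2κ (fun y hy hyc => by
      rw [hacd2]; exact hf3 y hy (by rw [← hctd2]; exact hyc))
    rw [hctd2, hacd2, hNk0] at this
    rw [this]; push_cast; ring
  have hBκ2 : ∀ k : ℕ, (k : ℕ) + 1 ≤ Ncd κ (cstar - 2) →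
      astar + 2 + 2 * (k : ℤ) ≤ BAC κ (cstar - 2) := by
    intro k hk
    obtain ⟨xt, hxt, hxtmin⟩ := Finset.exists_min_image (Dia κ (cstar - 2)) anticontent
      (Finset.card_pos.1 (by rw [← Ncd]; omega))
    obtain ⟨hxtS, hxtc⟩ := dia_mem.1 hxt
    have := diag_profile hQκ hxtS (fun y hy hyc =>
      hxtmin y (dia_mem.2 ⟨hy, hyc.trans hxtc⟩))
    rw [hxtc] at this
    have hge := hf4 xt hxtS hxtc
    rw [this]
    have : (k : ℤ) + 1 ≤ (Ncd κ (cstar - 2) : ℤ) := by exact_mod_cast hk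
    nlinarith [this, hge]
  -- Step 1 : n0 = n1
  have hstep1 : n0 = n1 := by
    rcases lt_trichotomy n0 n1 with hlt | heq | hgt
    · -- k := n0, run of κ around cstar - 1
      exfalso
      obtain ⟨l, r, hl1, hr1, hrun, hle, hre⟩ := exists_run κ n0 (c0 := cstar - 1) (by omega)
      have hrc : cstar ≤ r := by
        rcases eq_or_lt_of_le hr1 with h | h
        · exfalso
          have : Ncd κ (r + 1) = n1 + 1 := by rw [← h]; simpa using hNk1
          omega
        · omega
      obtain ⟨⟨p, hp⟩, _, _⟩ := struct_thm n0 κ Cκ hQκ hCκ hGκ l r (by omega) hrun hle hre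
      obtain ⟨⟨q, hq⟩, _, _⟩ := struct_thm n0 ν Cν hQν hCν hGν cstar r (by omega)
        (fun c hc1 hc2 => by
          rcases eq_or_lt_of_le hc1 with h | h
          · rw [← h, ← hn1]; omega
          · rw [← hNeq c (by omega) (by omega)]
            exact hrun c (by omega) hc2)
        (by simpa using Nat.le_of_eq hn0.symm)
        (by rw [← hNeq (r+1) (by omega) (by omega)]; exact hre)
      rcases eq_or_lt_of_le hl1 with hleq | hllt
      · omega
      · obtain ⟨⟨s, hs⟩, _, _⟩ := struct_thm n0 ν Cν hQν hCν hGν l (cstar - 2) (by omega)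
          (fun c hc1 hc2 => by
            rw [← hNeq c (by omega) (by omega)]
            exact hrun c hc1 (by omega))
          (by rw [← hNeq (l-1) (by omega) (by omega)]; exact hle)
          (by simp only [show cstar - 2 + 1 = cstar - 1 by ring, ← hn0]; omega)
        omega
    · exact heq
    · -- k := n1, run of κ around cstar
      exfalso
      obtain ⟨l, r, hl1, hr1, hrun, hle, hre⟩ := exists_run κ n1 (c0 := cstar) (by omega)
      have hlc : l ≤ cstar - 1 := by
        rcases eq_or_lt_of_le hl1 with h | h
        · exfalso
          have : Ncd κ (l - 1) = n0 + 1 := by rw [h]; simpa using hNk0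
          omega
        · omega
      obtain ⟨⟨p, hp⟩, _, _⟩ := struct_thm n1 κ Cκ hQκ hCκ hGκ l r (by omega) hrun hle hre
      obtain ⟨⟨q, hq⟩, _, _⟩ := struct_thm n1 ν Cν hQν hCν hGν l (cstar - 1) (by omega)
        (fun c hc1 hc2 => by
          rcases eq_or_lt_of_le hc2 with h | h
          · rw [h, ← hn0]; omega
          · rw [← hNeq c (by omega) (by omega)]
            exact hrun c hc1 (by omega))
        (by rw [← hNeq (l-1) (by omega) (by omega)]; exact hle)
        (by simp only [show cstar - 1 + 1 = cstar by ring, ← hn1]; omega)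
      rcases eq_or_lt_of_le hr1 with hreq | hrlt
      · omega
      · obtain ⟨⟨s, hs⟩, _, _⟩ := struct_thm n1 ν Cν hQν hCν hGν (cstar + 1) r (by omega)
          (fun c hc1 hc2 => by
            rw [← hNeq c (by omega) (by omega)]
            exact hrun c (by omega) hc2)
          (by simp only [show cstar + 1 - 1 = cstar by ring, ← hn1]; omega)
          (by rw [← hNeq (r+1) (by omega) (by omega)]; exact hre)
        omega
  -- Step 2 : the main contradiction, with n := n0 = n1
  set n : ℕ := n1 with hn
  obtain ⟨l, r, hl1, hr1, hrun, hle, hre⟩ := exists_run κ n (c0 := cstar) (by omega)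
  have hlc : l ≤ cstar - 1 := by
    rcases eq_or_lt_of_le hl1 with h | h
    · exfalso
      have : Ncd κ (l - 1) = n0 + 1 := by rw [h]; simpa using hNk0
      omega
    · omega
  obtain ⟨_, _, hκmin⟩ := struct_thm n κ Cκ hQκ hCκ hGκ l r (by omega) hrun hle hre
  have hminc : BAC κ l ≤ BAC κ cstar := hκmin cstar hl1 hr1
  rcases eq_or_lt_of_le hlc with hleq | hllt
  · -- l = cstar - 1
    rw [hleq] at hminc
    rw [hBκ0, hBκ1] at hminc
    omega
  · -- l ≤ cstar - 2
    obtain ⟨_, hν2, _⟩ := struct_thm n ν Cν hQν hCν hGν l (cstar - 2) (by omega)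
      (fun c hc1 hc2 => by
        rw [← hNeq c (by omega) (by omega)]
        exact hrun c hc1 (by omega))
      (by rw [← hNeq (l-1) (by omega) (by omega)]; exact hle)
      (by simp only [show cstar - 2 + 1 = cstar - 1 by ring, ← hn0]; omega)
    have hB2 := hBκ2 n (hrun (cstar - 2) (by omega) (by omega))
    have he1 : BAC κ (cstar - 2) = BAC ν (cstar - 2) := hBeq _ (by omega) (by omega)
    have he2 : BAC κ l = BAC ν l := hBeq _ (by omega) (by omega)
    rw [hBκ1] at hminc
    omega

end VD

/-- If `κ` is obtained from the skew diagram `ν` by adding a vertical domino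
with no box of `ν` above or to the left of either added box, then at most one
of `κ`, `ν` lies in `Γ`. -/
theorem vertical_domino_not_both_gamma (ν κ : Finset (ℕ × ℕ)) (i j : ℕ)
    (hν : IsSkew ν) (hκ : IsSkew κ)
    (h1 : (i, j) ∉ ν) (h2 : (i + 1, j) ∉ ν)
    (hκν : κ = insert (i, j) (insert (i + 1, j) ν))
    (habove : ∀ b ∈ ν, ¬ (b.2 = j ∧ b.1 ≤ i + 1))
    (hleft : ∀ b ∈ ν, ¬ ((b.1 = i ∨ b.1 = i + 1) ∧ b.2 < j)) :
    ¬ (InGamma κ ∧ InGamma ν) := by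
  rintro ⟨hκg, hνg⟩
  exact VD.main_contra ν κ i j h1 h2 hκν habove hleft hκg hνg
end

section
/- Let μ be a partition with weight diagram x_μ, and suppose flipping a wb pair at positions (l_w, l_b) with l_w < l_b (white at l_w, black at l_b) yields the weight diagram x_λ of a partition λ. Then λ ⊆ μ, μ/λ is a single connected rim hook γ, the height ht(γ) equals the number of black dots of x_μ in the interval [l_w, l_b], and wd(γ) = l_b − l_w − ht(γ) + 1; in particular the total number of boxes removed is l_b − l_w. -/
open Finset

/-- The sequence `x_λ = (λ₁, λ₂ − 1, λ₃ − 2, …)` (indexed from `0`). -/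
def xseq (μ : YoungDiagram) (k : ℕ) : ℤ := (μ.rowLen k : ℤ) - (k : ℤ)

/-- `lam` is obtained from `μ` by flipping the wb pair `(lw, lb)`:
`lw < lb`, `lw` is white and `lb` is black in `x_μ`, and the black set of
`x_lam` is that of `x_μ` with `lb` replaced by `lw`. -/
def IsFlip (μ lam : YoungDiagram) (lw lb : ℤ) : Prop :=
  lw < lb ∧ lw ∉ Set.range (xseq μ) ∧ lb ∈ Set.range (xseq μ) ∧
    Set.range (xseq lam) = insert lw (Set.range (xseq μ) \ {lb})

/-- The number of black dots of `x_μ` in the interval `[a, b]`. -/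
noncomputable def blackCount (μ : YoungDiagram) (a b : ℤ) : ℕ :=
  Nat.card {n : ℤ // n ∈ Set.Icc a b ∧ n ∈ Set.range (xseq μ)}

/-- The number of white dots of `x_μ` in the interval `[a, b]`. -/
noncomputable def whiteCount (μ : YoungDiagram) (a b : ℤ) : ℕ :=
  Nat.card {n : ℤ // n ∈ Set.Icc a b ∧ n ∉ Set.range (xseq μ)}

private lemma rowLen_eventually_zero (μ : YoungDiagram) : μ.rowLen (μ.colLen 0) = 0 := by
  by_contra hpos
  have h1 : (μ.colLen 0, 0) ∈ μ := by
    rw [YoungDiagram.mem_iff_lt_rowLen]; omega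
  rw [YoungDiagram.mem_iff_lt_colLen] at h1; omega

private lemma xseq_strictAnti (μ : YoungDiagram) : StrictAnti (xseq μ) := by
  apply strictAnti_nat_of_succ_lt
  intro n
  have := μ.rowLen_anti n (n+1) (Nat.le_succ n)
  unfold xseq; omega

private lemma xseq_anti_shift (μ : YoungDiagram) {a b : ℕ} (h : a ≤ b) :
    xseq μ b + b ≤ xseq μ a + a := by
  have := μ.rowLen_anti a b h
  unfold xseq; omega

private lemma xseq_small (μ : YoungDiagram) (c : ℤ) : ∃ k, xseq μ k < c := by
  refine ⟨μ.colLen 0 + (1 - c).toNat, ?_⟩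
  have h0 : μ.rowLen (μ.colLen 0 + (1 - c).toNat) = 0 := by
    have h1 := μ.rowLen_anti (μ.colLen 0) (μ.colLen 0 + (1 - c).toNat) (Nat.le_add_right _ _)
    have h2 := rowLen_eventually_zero μ
    omega
  unfold xseq
  rw [h0]
  have := Int.self_le_toNat (1 - c)
  omega

private lemma strictAnti_range_eq {f g : ℕ → ℤ} (hf : StrictAnti f) (hg : StrictAnti g)
    (h : Set.range f = Set.range g) : ∀ k, f k = g k := by
  intro k
  induction k using Nat.strong_induction_on with
  | _ k ih =>
    have key : ∀ (f' g' : ℕ → ℤ), StrictAnti f' → StrictAnti g' → Set.range f' = Set.range g' →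
        (∀ j, j < k → f' j = g' j) → f' k ≤ g' k := by
      intro f' g' hf' hg' h' ihe
      obtain ⟨j, hj⟩ : f' k ∈ Set.range g' := h' ▸ Set.mem_range_self k
      rcases lt_or_ge j k with hjk | hjk
      · exfalso
        have h1 : f' j = g' j := ihe j hjk
        have h2 : f' k < f' j := hf' hjk
        omega
      · calc f' k = g' j := hj.symm
          _ ≤ g' k := hg'.antitone hjk
    have h1 := key f g hf hg h ih
    have h2 := key g f hg hf h.symm (fun j hj => (ih j hj).symm)
    omega

set_option maxHeartbeats 1000000 in
/-- Flipping a wb pair `(lw, lb)` of `x_μ` yields `λ ⊆ μ` with `μ/λ` a single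
connected rim hook `γ`, whose height is the number of black dots of `x_μ` in
`[lw, lb]`, whose width is `lb − lw − ht(γ) + 1`, and whose size is `lb − lw`. -/
theorem flip_removes_rim_hook (μ lam : YoungDiagram) (lw lb : ℤ)
    (h : IsFlip μ lam lw lb) :
    lam ≤ μ ∧ IsHook (μ.cells \ lam.cells) ∧
      ht (μ.cells \ lam.cells) = blackCount μ lw lb ∧
      (wd (μ.cells \ lam.cells) : ℤ) = lb - lw - (ht (μ.cells \ lam.cells) : ℤ) + 1 ∧
      ((μ.cells \ lam.cells).card : ℤ) = lb - lw := by
  set S := μ.cells \ lam.cells with hS_def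
  obtain ⟨hlt, hwhite, ⟨r, hr⟩, hrange⟩ := h
  have hmua := xseq_strictAnti μ
  have hlaa := xseq_strictAnti lam
  -- the index s of the last modified row
  have hex : ∃ k, xseq μ (k + 1) < lw := by
    obtain ⟨k, hk⟩ := xseq_small μ lw
    exact ⟨k, lt_of_le_of_lt (le_of_lt (hmua (Nat.lt_succ_self k))) hk⟩
  set s := Nat.find hex with hs_def
  have hs1 : xseq μ (s + 1) < lw := Nat.find_spec hex
  have hrs : r ≤ s := by
    by_contra hc
    push_neg at hc
    have h4 : xseq μ r ≤ xseq μ (s + 1) := hmua.antitone (by omega)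
    omega
  have hs2 : ∀ k, k ≤ s → lw < xseq μ k := by
    intro k hk
    have hge : lw ≤ xseq μ k := by
      rcases Nat.eq_zero_or_pos k with rfl | hkpos
      · have : xseq μ r ≤ xseq μ 0 := hmua.antitone (Nat.zero_le r)
        omega
      · have hmin := Nat.find_min hex (m := k - 1) (by omega)
        have hk1 : k - 1 + 1 = k := by omega
        rw [hk1] at hmin
        omega
    rcases eq_or_lt_of_le hge with heq | hlt'
    · exact absurd ⟨k, heq.symm⟩ hwhite
    · exact hlt'
  -- the explicit target sequence
  set g : ℕ → ℤ := fun k =>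
    if k < r then xseq μ k else if k < s then xseq μ (k + 1) else if k = s then lw
    else xseq μ k with hg_def
  have hganti : StrictAnti g := by
    apply strictAnti_nat_of_succ_lt
    intro k
    simp only [hg_def]
    split_ifs <;>
      first
        | exact hmua (by omega)
        | omega
        | (exact lt_of_le_of_lt (hmua.antitone (by omega)) (by omega))
        | (exact lt_of_lt_of_le (by omega) (hmua.antitone (by omega) : xseq μ r ≤ _))
        | (exact lt_of_le_of_lt (by omega : (_ : ℤ) ≤ lw) (hs2 _ (by omega)))
        | (subst_vars; exact hs1)
        | (subst_vars; exact lt_of_le_of_lt (by omega : (_ : ℤ) ≤ lw) (hs2 _ (by omega)))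
        | (subst_vars; exact hmua (by omega))
  have hxinj : Function.Injective (xseq μ) := hmua.injective
  have hrangeg : Set.range g = insert lw (Set.range (xseq μ) \ {lb}) := by
    ext x
    simp only [Set.mem_range, Set.mem_insert_iff, Set.mem_diff, Set.mem_singleton_iff]
    constructor
    · rintro ⟨k, rfl⟩
      simp only [hg_def]
      split_ifs with h1 h2 h3
      · refine Or.inr ⟨⟨k, rfl⟩, fun he => ?_⟩
        have := hxinj (he.trans hr.symm); omega
      · refine Or.inr ⟨⟨k + 1, rfl⟩, fun he => ?_⟩
        have := hxinj (he.trans hr.symm); omega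
      · exact Or.inl rfl
      · refine Or.inr ⟨⟨k, rfl⟩, fun he => ?_⟩
        have := hxinj (he.trans hr.symm); omega
    · rintro (rfl | ⟨⟨j, rfl⟩, hne⟩)
      · refine ⟨s, ?_⟩
        simp only [hg_def]
        rw [if_neg (by omega), if_neg (by omega)]
        simp
      · have hjr : j ≠ r := fun he => hne (he ▸ hr)
        rcases lt_or_gt_of_ne hjr with hj | hj
        · exact ⟨j, by simp only [hg_def]; rw [if_pos hj]⟩
        · rcases le_or_gt j s with hjs | hjs
          · refine ⟨j - 1, ?_⟩
            simp only [hg_def]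
            rw [if_neg (by omega), if_pos (by omega)]
            congr 1
            omega
          · refine ⟨j, ?_⟩
            simp only [hg_def]
            rw [if_neg (by omega), if_neg (by omega), if_neg (by omega)]
  have hfg : ∀ k, xseq lam k = g k :=
    strictAnti_range_eq hlaa hganti (hrange.trans hrangeg.symm)
  -- explicit values of xseq lam
  have hv1 : ∀ k, k < r → xseq lam k = xseq μ k := by
    intro k hk; rw [hfg k]; simp only [hg_def]; rw [if_pos hk]
  have hv2 : ∀ k, r ≤ k → k < s → xseq lam k = xseq μ (k + 1) := by
    intro k h1 h2; rw [hfg k]; simp only [hg_def]; rw [if_neg (by omega), if_pos h2]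
  have hv3 : xseq lam s = lw := by
    rw [hfg s]; simp only [hg_def]; rw [if_neg (by omega), if_neg (by omega)]; simp
  have hv4 : ∀ k, s < k → xseq lam k = xseq μ k := by
    intro k hk; rw [hfg k]; simp only [hg_def]
    rw [if_neg (by omega), if_neg (by omega), if_neg (by omega)]
  have hle : ∀ i, xseq lam i ≤ xseq μ i := by
    intro i
    rcases lt_or_ge i r with h1 | h1
    · rw [hv1 i h1]
    · rcases lt_or_ge i s with h2 | h2
      · rw [hv2 i h1 h2]; exact le_of_lt (hmua (by omega))
      · rcases eq_or_lt_of_le h2 with h3 | h3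
        · rw [← h3, hv3]; exact le_of_lt (hs2 s (by omega))
        · rw [hv4 i h3]
  have hstrict : ∀ i, r ≤ i → i ≤ s → xseq lam i < xseq μ i := by
    intro i h1 h2
    rcases lt_or_ge i s with h3 | h3
    · rw [hv2 i h1 h3]; exact hmua (by omega)
    · have h4 : i = s := by omega
      subst h4
      rw [hv3]; exact hs2 s (by omega)
  -- membership characterizations
  have hmemC : ∀ i j : ℕ, ((i, j) ∈ S) ↔
      (xseq lam i ≤ (j : ℤ) - i ∧ (j : ℤ) - i < xseq μ i) := by
    intro i j
    simp only [hS_def, Finset.mem_sdiff, YoungDiagram.mem_cells, YoungDiagram.mem_iff_lt_rowLen]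
    unfold xseq
    omega
  have hmemN : ∀ i j : ℕ, ((i, j) ∈ S) ↔ (lam.rowLen i ≤ j ∧ j < μ.rowLen i) := by
    intro i j
    simp only [hS_def, Finset.mem_sdiff, YoungDiagram.mem_cells, YoungDiagram.mem_iff_lt_rowLen]
    omega
  have hlamle : lam ≤ μ := by
    rw [← YoungDiagram.cells_subset_iff]
    intro x hx
    obtain ⟨i, j⟩ := x
    simp only [YoungDiagram.mem_cells, YoungDiagram.mem_iff_lt_rowLen] at hx ⊢
    have := hle i
    unfold xseq at this
    omega
  have hrowS : ∀ i j : ℕ, (i, j) ∈ S → r ≤ i ∧ i ≤ s := by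
    intro i j hij
    rw [hmemC] at hij
    constructor
    · by_contra hc
      push_neg at hc
      have := hv1 i hc
      omega
    · by_contra hc
      push_neg at hc
      have := hv4 i hc
      omega
  have hrownonempty : ∀ i, r ≤ i → i ≤ s → (i, lam.rowLen i) ∈ S := by
    intro i h1 h2
    have h3 := hstrict i h1 h2
    rw [hmemC]
    unfold xseq at h3 ⊢
    omega
  have hcb : ∀ i j : ℕ, (i, j) ∈ S → lw ≤ (j : ℤ) - i ∧ (j : ℤ) - i < lb := by
    intro i j hij
    obtain ⟨h1, h2⟩ := hrowS i j hij
    rw [hmemC] at hij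
    have h3 : xseq lam s ≤ xseq lam i := hlaa.antitone h2
    have h4 : xseq μ i ≤ xseq μ r := hmua.antitone h1
    rw [hv3] at h3
    omega
  -- for each content in [lw, lb), there is a box of S with that content
  have hfind : ∀ c : ℤ, lw ≤ c → c < lb → ∃ i j : ℕ, (i, j) ∈ S ∧ (j : ℤ) - i = c := by
    intro c hc1 hc2
    have hex2 : ∃ k, xseq μ k ≤ c := by
      obtain ⟨k, hk⟩ := xseq_small μ c; exact ⟨k, le_of_lt hk⟩
    set i := Nat.find hex2 with hi_def
    have hi1 : xseq μ i ≤ c := Nat.find_spec hex2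
    have hir : r < i := by
      by_contra hc'
      push_neg at hc'
      have : xseq μ r ≤ xseq μ i := hmua.antitone hc'
      omega
    have hi2 : c < xseq μ (i - 1) := by
      have := Nat.find_min hex2 (m := i - 1) (by omega)
      omega
    have his : i - 1 ≤ s := by
      by_contra hc'
      push_neg at hc'
      have hfm := Nat.find_min hex2 (m := s + 1) (by omega)
      omega
    have hlow : xseq lam (i - 1) ≤ c := by
      rcases lt_or_ge (i - 1) s with h2 | h2
      · rw [hv2 (i - 1) (by omega) h2]
        have : i - 1 + 1 = i := by omega
        rw [this]
        exact hi1
      · have h4 : i - 1 = s := by omega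
        rw [h4, hv3]
        exact hc1
    have hnn : 0 ≤ c + ((i - 1 : ℕ) : ℤ) := by
      have h5 : (0 : ℤ) ≤ xseq lam (i - 1) + ((i - 1 : ℕ) : ℤ) := by
        unfold xseq; omega
      omega
    refine ⟨i - 1, (c + ((i - 1 : ℕ) : ℤ)).toNat, ?_, ?_⟩
    · rw [hmemC, Int.toNat_of_nonneg hnn]
      constructor <;> omega
    · rw [Int.toNat_of_nonneg hnn]
      omega
  -- content is injective on S
  have hcinj : ∀ i j i' j' : ℕ, (i, j) ∈ S → (i', j') ∈ S →
      (j : ℤ) - i = (j' : ℤ) - i' → i = i' ∧ j = j' := by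
    intro i j i' j' h1 h2 heq
    have hw1 := (hmemC i j).mp h1
    have hw2 := (hmemC i' j').mp h2
    have hr1 := hrowS i j h1
    have hr2 := hrowS i' j' h2
    have hii : i = i' := by
      by_contra hne
      rcases lt_or_gt_of_ne hne with hlt' | hlt'
      · have hvv := hv2 i hr1.1 (by omega)
        have hmm : xseq μ i' ≤ xseq μ (i + 1) := hmua.antitone (by omega)
        omega
      · have hvv := hv2 i' hr2.1 (by omega)
        have hmm : xseq μ i ≤ xseq μ (i' + 1) := hmua.antitone (by omega)
        omega
    subst hii
    exact ⟨rfl, by omega⟩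
  -- cardinality
  have hcard : (S.card : ℤ) = lb - lw := by
    have hbij : S.card = (Finset.Icc lw (lb - 1)).card := by
      apply Finset.card_bij (fun a _ => (a.2 : ℤ) - a.1)
      · intro a ha
        obtain ⟨i, j⟩ := a
        have := hcb i j ha
        rw [Finset.mem_Icc]
        omega
      · intro a ha b hb heq
        obtain ⟨i, j⟩ := a
        obtain ⟨i', j'⟩ := b
        obtain ⟨h1, h2⟩ := hcinj i j i' j' ha hb heq
        simp [h1, h2]
      · intro c hc
        rw [Finset.mem_Icc] at hc
        obtain ⟨i, j, hmem, hcc⟩ := hfind c hc.1 (by omega)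
        exact ⟨(i, j), hmem, hcc⟩
    rw [hbij, Int.card_Icc]
    omega
  -- height
  have himfst : S.image Prod.fst = Finset.Icc r s := by
    ext i
    simp only [Finset.mem_image, Finset.mem_Icc]
    constructor
    · rintro ⟨⟨i', j⟩, hmem, rfl⟩
      exact hrowS i' j hmem
    · intro hi
      exact ⟨(i, lam.rowLen i), hrownonempty i hi.1 hi.2, rfl⟩
  have hht : ht S = s - r + 1 := by
    rw [ht, himfst, Nat.card_Icc]
    omega
  -- black count
  have hblack : blackCount μ lw lb = s - r + 1 := by
    have hseteq : {n : ℤ | n ∈ Set.Icc lw lb ∧ n ∈ Set.range (xseq μ)} =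
        xseq μ '' Set.Icc r s := by
      ext n
      simp only [Set.mem_setOf_eq, Set.mem_Icc, Set.mem_image, Set.mem_range]
      constructor
      · rintro ⟨⟨hn1, hn2⟩, k, rfl⟩
        refine ⟨k, ⟨?_, ?_⟩, rfl⟩
        · by_contra hc
          push_neg at hc
          have : xseq μ r < xseq μ k := hmua hc
          omega
        · by_contra hc
          push_neg at hc
          have : xseq μ k ≤ xseq μ (s + 1) := hmua.antitone (by omega)
          omega
      · rintro ⟨k, ⟨hk1, hk2⟩, rfl⟩
        have h1 := hs2 k hk2
        have h2 : xseq μ k ≤ xseq μ r := hmua.antitone hk1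
        exact ⟨⟨by omega, by omega⟩, k, rfl⟩
    rw [blackCount]
    have hcoe : Nat.card {n : ℤ // n ∈ Set.Icc lw lb ∧ n ∈ Set.range (xseq μ)} =
        Nat.card {n : ℤ | n ∈ Set.Icc lw lb ∧ n ∈ Set.range (xseq μ)} := rfl
    rw [hcoe, Nat.card_coe_set_eq, hseteq, Set.ncard_image_of_injective _ hxinj,
      ← Finset.coe_Icc, Set.ncard_coe_finset, Nat.card_Icc]
    omega
  -- width
  have hAint : ((lam.rowLen s : ℕ) : ℤ) = lw + s := by
    have := hv3; unfold xseq at this; omega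
  have hBint : ((μ.rowLen r : ℕ) : ℤ) = lb + r := by
    unfold xseq at hr; omega
  have hB1 : 1 ≤ μ.rowLen r := by
    have h3 := hstrict r (le_refl r) hrs
    unfold xseq at h3
    omega
  have himsnd : S.image Prod.snd = Finset.Icc (lam.rowLen s) (μ.rowLen r - 1) := by
    ext j
    simp only [Finset.mem_image, Finset.mem_Icc]
    constructor
    · rintro ⟨⟨i, j'⟩, hmem, rfl⟩
      obtain ⟨h1, h2⟩ := hrowS i j' hmem
      rw [hmemN] at hmem
      have h3 := lam.rowLen_anti i s h2
      have h4 := μ.rowLen_anti r i h1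
      omega
    · intro ⟨hj1, hj2⟩
      have hexB : ∃ k, μ.rowLen (k + 1) ≤ j := by
        refine ⟨μ.colLen 0, ?_⟩
        have := μ.rowLen_anti (μ.colLen 0) (μ.colLen 0 + 1) (by omega)
        have := rowLen_eventually_zero μ
        omega
      set i1 := Nat.find hexB with hi1_def
      have hf1 : μ.rowLen (i1 + 1) ≤ j := Nat.find_spec hexB
      have hi1r : r ≤ i1 := by
        by_contra hc'
        push_neg at hc'
        have : μ.rowLen r ≤ μ.rowLen (i1 + 1) := μ.rowLen_anti (i1 + 1) r (by omega)
        omega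
      have hi1s : i1 ≤ s := by
        apply Nat.find_le
        have h5 := hs1
        have h6 := hv3
        unfold xseq at h5 h6
        omega
      have hup : j < μ.rowLen i1 := by
        rcases Nat.eq_zero_or_pos i1 with h0 | h0
        · have : μ.rowLen r ≤ μ.rowLen i1 := μ.rowLen_anti i1 r (by omega)
          omega
        · have := Nat.find_min hexB (m := i1 - 1) (by omega)
          have heq1 : i1 - 1 + 1 = i1 := by omega
          rw [heq1] at this
          omega
      have hlo : lam.rowLen i1 ≤ j := by
        rcases lt_or_ge i1 s with h2 | h2
        · have := hv2 i1 hi1r h2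
          unfold xseq at this
          omega
        · have h4 : i1 = s := by omega
          rw [h4]
          exact hj1
      exact ⟨(i1, j), (hmemN i1 j).mpr ⟨hlo, hup⟩, rfl⟩
  have hgap : xseq μ s + (s : ℤ) ≤ xseq μ r + r := xseq_anti_shift μ hrs
  have hwd : (wd S : ℤ) = lb - lw - (ht S : ℤ) + 1 := by
    rw [wd, himsnd, Nat.card_Icc, hht]
    have h5 := hs2 s (le_refl s)
    push_cast
    omega
  -- adjacency of consecutive contents
  have hadj : ∀ i j i' j' : ℕ, (i, j) ∈ S → (i', j') ∈ S →
      (j' : ℤ) - i' = (j : ℤ) - i + 1 → BoxAdj (i, j) (i', j') := by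
    intro i j i' j' h1 h2 heq
    have hw1 := (hmemC i j).mp h1
    have hw2 := (hmemC i' j').mp h2
    obtain ⟨hr1, hs1'⟩ := hrowS i j h1
    obtain ⟨hr2, hs2'⟩ := hrowS i' j' h2
    have hii : i' = i ∨ i' + 1 = i := by
      rcases lt_trichotomy i' i with hlt' | heq' | hgt'
      · right
        by_contra hne
        have e1 := hv2 i' hr2 (by omega)
        have e2 : xseq μ i ≤ xseq μ (i' + 2) := hmua.antitone (by omega)
        have e3 : xseq μ (i' + 2) < xseq μ (i' + 1) := hmua (by omega)
        omega
      · left; exact heq'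
      · exfalso
        have e1 := hv2 i hr1 (by omega)
        have e2 : xseq μ i' ≤ xseq μ (i + 1) := hmua.antitone (by omega)
        omega
    rcases hii with hcase | hcase
    · exact Or.inl ⟨by omega, Or.inl (by omega)⟩
    · exact Or.inr ⟨by omega, Or.inr (by omega)⟩
  -- connectivity chains
  have hchain : ∀ n : ℕ, ∀ a b : ℕ × ℕ, a ∈ S → b ∈ S →
      (b.2 : ℤ) - b.1 = (a.2 : ℤ) - a.1 + n →
      Relation.ReflTransGen (fun x y => x ∈ S ∧ y ∈ S ∧ BoxAdj x y) a b := by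
    intro n
    induction n with
    | zero =>
      intro a b ha hb heq
      obtain ⟨i, j⟩ := a
      obtain ⟨i', j'⟩ := b
      obtain ⟨h1, h2⟩ := hcinj i j i' j' ha hb (by push_cast at heq; omega)
      subst h1
      subst h2
      exact Relation.ReflTransGen.refl
    | succ n ih =>
      intro a b ha hb heq
      obtain ⟨i, j⟩ := a
      obtain ⟨i', j'⟩ := b
      simp only at heq
      have hcb1 := hcb i j ha
      have hcb2 := hcb i' j' hb
      obtain ⟨im, jm, hm, hcm⟩ := hfind ((j : ℤ) - i + n)
        (by omega) (by push_cast at heq; omega)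
      have step := hadj im jm i' j' hm hb (by push_cast at heq; omega)
      exact Relation.ReflTransGen.tail
        (ih (i, j) (im, jm) ha hm (by simp only; omega)) ⟨hm, hb, step⟩
  have hsymmadj : ∀ x y : ℕ × ℕ, BoxAdj x y → BoxAdj y x := by
    intro x y hxy
    rcases hxy with ⟨h1, h2 | h2⟩ | ⟨h1, h2 | h2⟩
    · exact Or.inl ⟨h1.symm, Or.inr h2⟩
    · exact Or.inl ⟨h1.symm, Or.inl h2⟩
    · exact Or.inr ⟨h1.symm, Or.inr h2⟩
    · exact Or.inr ⟨h1.symm, Or.inl h2⟩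
  have hconn : IsConnectedBoxes S := by
    intro a ha b hb
    rcases le_total ((a.2 : ℤ) - a.1) ((b.2 : ℤ) - b.1) with hab | hab
    · exact hchain ((b.2 : ℤ) - b.1 - ((a.2 : ℤ) - a.1)).toNat a b ha hb (by omega)
    · have hrev := hchain ((a.2 : ℤ) - a.1 - ((b.2 : ℤ) - b.1)).toNat b a hb ha (by omega)
      have hsym : Symmetric (fun x y => x ∈ S ∧ y ∈ S ∧ BoxAdj x y) := by
        rintro x y ⟨h1, h2, h3⟩
        exact ⟨h2, h1, hsymmadj x y h3⟩
      exact (@Relation.ReflTransGen.stdSymm _ _ ⟨fun x y h => hsym h⟩).symm _ _ hrev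
  refine ⟨hlamle, ⟨⟨lam, μ, hlamle, hS_def⟩, ⟨(r, lam.rowLen r), hrownonempty r (le_refl r) hrs⟩,
    hconn, ?_⟩, by rw [hht, hblack], hwd, hcard⟩
  rintro ⟨i, j⟩ ha ⟨i', j'⟩ hb hcc
  unfold content at hcc
  obtain ⟨h1, h2⟩ := hcinj i j i' j' ha hb hcc
  simp [h1, h2]
end
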